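/- arXiv:1407.4018 — 3 statements merged into one kernel-verified Lean document; each statement's English description precedes it below -/
import Mathlib

section
/- Let X be a Banach space over 𝕂 (𝕂 = ℝ or ℂ) with the alternative Daugavet property. Then every Lipschitz map T: X → X for which slope(T) is an SCD set satisfies the alternative Daugavet equation max_{θ ∈ 𝕋} ‖Id + θ·T‖ = 1 + ‖T‖, where 𝕋 = {θ ∈ 𝕂 : |θ| = 1} and ‖·‖ denotes the Lipschitz seminorm. -/
open Set Metric Topology

/-- The Lipschitz seminorm `‖f‖ = sup { ‖f x₁ - f x₂‖ / ‖x₁ - x₂‖ : x₁ ≠ x₂ }`. -/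
noncomputable def lipSemi {X Y : Type*} [NormedAddCommGroup X] [NormedAddCommGroup Y]
    (f : X → Y) : ℝ :=
  sSup {r : ℝ | ∃ x₁ x₂ : X, x₁ ≠ x₂ ∧ r = ‖f x₁ - f x₂‖ / ‖x₁ - x₂‖}

/-- The Lip-slice `S(S_X, f, ε)` of the unit sphere generated by a Lipschitz
functional `f : X → ℝ` and `ε > 0`. -/
def lipSlice {X : Type*} [NormedAddCommGroup X] [NormedSpace ℝ X]
    (f : X → ℝ) (ε : ℝ) : Set X :=
  {z | ∃ x₁ x₂ : X, x₁ ≠ x₂ ∧ z = ‖x₁ - x₂‖⁻¹ • (x₁ - x₂) ∧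
    lipSemi f - ε < (f x₁ - f x₂) / ‖x₁ - x₂‖}

/-- `S` is a Lip-slice of the unit sphere of `X`. -/
def IsLipSlice {X : Type*} [NormedAddCommGroup X] [NormedSpace ℝ X] (S : Set X) : Prop :=
  ∃ (f : X → ℝ) (ε : ℝ), (∃ C, LipschitzWith C f) ∧ (∃ x y : X, f x ≠ f y) ∧ 0 < ε ∧
    S = lipSlice f ε

/-- A rank-one bounded linear operator: `T = g(·) • u`. -/
def RankOne (𝕜 : Type*) [RCLike 𝕜] {X : Type*} [NormedAddCommGroup X] [NormedSpace 𝕜 X]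
    (T : X →L[𝕜] X) : Prop :=
  ∃ (g : X →L[𝕜] 𝕜) (u : X), ∀ x, T x = g x • u

/-- The Daugavet property: every rank-one operator satisfies `‖Id + T‖ = 1 + ‖T‖`. -/
def DaugavetProperty (𝕜 : Type*) [RCLike 𝕜] (X : Type*) [NormedAddCommGroup X]
    [NormedSpace 𝕜 X] : Prop :=
  ∀ T : X →L[𝕜] X, RankOne 𝕜 T → ‖ContinuousLinearMap.id 𝕜 X + T‖ = 1 + ‖T‖

/-- The alternative Daugavet property: every rank-one operator satisfies
`max_{θ ∈ 𝕋} ‖Id + θT‖ = 1 + ‖T‖`. -/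
def AltDaugavetProperty (𝕜 : Type*) [RCLike 𝕜] (X : Type*) [NormedAddCommGroup X]
    [NormedSpace 𝕜 X] : Prop :=
  ∀ T : X →L[𝕜] X, RankOne 𝕜 T →
    IsGreatest {r : ℝ | ∃ θ : 𝕜, ‖θ‖ = 1 ∧ r = ‖ContinuousLinearMap.id 𝕜 X + θ • T‖}
      (1 + ‖T‖)

/-- `S` is a slice of the set `A`: a nonempty set of the form `{x ∈ A | Re f x > α}`
with `f` a nonzero continuous linear functional. -/
def IsSlice (𝕜 : Type*) [RCLike 𝕜] {X : Type*} [NormedAddCommGroup X] [NormedSpace 𝕜 X]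
    (A S : Set X) : Prop :=
  S.Nonempty ∧ ∃ (f : X →L[𝕜] 𝕜) (α : ℝ), f ≠ 0 ∧ S = {x ∈ A | α < RCLike.re (f x)}

/-- Slicely countably determined set. -/
def IsSCD (𝕜 : Type*) [RCLike 𝕜] {X : Type*} [NormedAddCommGroup X] [NormedSpace 𝕜 X]
    [NormedSpace ℝ X] (A : Set X) : Prop :=
  ∃ S : ℕ → Set X, (∀ n, IsSlice 𝕜 A (S n)) ∧
    ∀ B ⊆ A, (∀ n, (B ∩ S n).Nonempty) → A ⊆ closure (convexHull ℝ B)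

/-- The slope set of a map `T : X → X`. -/
def lipSlope {X : Type*} [NormedAddCommGroup X] [NormedSpace ℝ X] (T : X → X) : Set X :=
  {z | ∃ x₁ x₂ : X, x₁ ≠ x₂ ∧ z = ‖x₁ - x₂‖⁻¹ • (T x₁ - T x₂)}

/-- `K(X*)`: the intersection of the dual unit sphere with the weak*-closure of the
set of extreme points of the dual unit ball, as a subset of the weak* dual. -/
noncomputable def Kdual (𝕜 : Type*) [RCLike 𝕜] (X : Type*) [NormedAddCommGroup X]
    [NormedSpace 𝕜 X] : Set (WeakDual 𝕜 X) :=
  {φ | ‖WeakDual.toStrongDual φ‖ = 1} ∩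
    closure (WeakDual.toStrongDual ⁻¹'
      Set.extremePoints ℝ (closedBall (0 : StrongDual 𝕜 X) 1))

/-- `D(S, ε) = {x* ∈ K(X*) : ∃ y ∈ S, Re x*(y) > 1 - ε}`. -/
def Dset (𝕜 : Type*) [RCLike 𝕜] {X : Type*} [NormedAddCommGroup X] [NormedSpace 𝕜 X]
    (S : Set X) (ε : ℝ) : Set ↥(Kdual 𝕜 X) :=
  {φ | ∃ y ∈ S, 1 - ε < RCLike.re ((φ : WeakDual 𝕜 X) y)}

/-- `D̃(S, ε) = {x* ∈ K(X*) : ∃ y ∈ S, |x*(y)| > 1 - ε}`. -/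
def DsetAbs (𝕜 : Type*) [RCLike 𝕜] {X : Type*} [NormedAddCommGroup X] [NormedSpace 𝕜 X]
    (S : Set X) (ε : ℝ) : Set ↥(Kdual 𝕜 X) :=
  {φ | ∃ y ∈ S, 1 - ε < ‖(φ : WeakDual 𝕜 X) y‖}

/-- A set is dentable if it admits slices of arbitrarily small diameter. -/
def Dentable (𝕜 : Type*) [RCLike 𝕜] {X : Type*} [NormedAddCommGroup X] [NormedSpace 𝕜 X]
    (B : Set X) : Prop :=
  ∀ ε : ℝ, 0 < ε → ∃ S : Set X, IsSlice 𝕜 B S ∧ diam S < ε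

/-- A sequence equivalent to the unit vector basis of `ℓ₁`. -/
def IsL1Seq (𝕜 : Type*) [RCLike 𝕜] {X : Type*} [NormedAddCommGroup X] [NormedSpace 𝕜 X]
    (x : ℕ → X) : Prop :=
  ∃ C : ℝ, 1 ≤ C ∧ ∀ (n : ℕ) (a : ℕ → 𝕜),
    C⁻¹ * (∑ k ∈ Finset.range n, ‖a k‖) ≤ ‖∑ k ∈ Finset.range n, a k • x k‖ ∧
    ‖∑ k ∈ Finset.range n, a k • x k‖ ≤ C * (∑ k ∈ Finset.range n, ‖a k‖)

/-- Numerical radius of a bounded linear operator. -/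
noncomputable def numRadius (𝕜 : Type*) [RCLike 𝕜] {X : Type*} [NormedAddCommGroup X]
    [NormedSpace 𝕜 X] (T : X →L[𝕜] X) : ℝ :=
  sSup {r : ℝ | ∃ (x : X) (f : X →L[𝕜] 𝕜), ‖x‖ = 1 ∧ ‖f‖ = 1 ∧ f x = 1 ∧ r = ‖f (T x)‖}

/-- Numerical index of a Banach space. -/
noncomputable def numIndex (𝕜 : Type*) [RCLike 𝕜] (X : Type*) [NormedAddCommGroup X]
    [NormedSpace 𝕜 X] : ℝ :=
  sInf {r : ℝ | ∃ T : X →L[𝕜] X, ‖T‖ = 1 ∧ r = numRadius 𝕜 T}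

/-- Numerical radius of a Lipschitz map. -/
noncomputable def lipNumRadius (𝕜 : Type*) [RCLike 𝕜] {X : Type*} [NormedAddCommGroup X]
    [NormedSpace 𝕜 X] (T : X → X) : ℝ :=
  sSup {r : ℝ | ∃ (x y : X) (f : X →L[𝕜] 𝕜), x ≠ y ∧
    RCLike.re (f (x - y)) = ‖f‖ * ‖x - y‖ ∧ ‖f‖ * ‖x - y‖ = ‖x - y‖ ^ 2 ∧
    r = ‖f (T x - T y)‖ / ‖x - y‖ ^ 2}

/-- The Lipschitz numerical index of a Banach space. -/
noncomputable def lipNumIndex (𝕜 : Type*) [RCLike 𝕜] (X : Type*) [NormedAddCommGroup X]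
    [NormedSpace 𝕜 X] : ℝ :=
  sInf {r : ℝ | ∃ T : X → X, (∃ C, LipschitzWith C T) ∧ lipSemi T = 1 ∧
    r = lipNumRadius 𝕜 T}

/-- The slice `S(S_X, Re f, ε)` of the unit sphere given by a linear functional. -/
def sphereSlice (𝕜 : Type*) [RCLike 𝕜] {X : Type*} [NormedAddCommGroup X]
    [NormedSpace 𝕜 X] (f : X →L[𝕜] 𝕜) (ε : ℝ) : Set X :=
  {z | ‖z‖ = 1 ∧ 1 - ε < RCLike.re (f z)}

/-- `𝕋 • S`, the set of rotations of elements of `S` by unimodular scalars. -/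
def circleSmul (𝕜 : Type*) [RCLike 𝕜] {X : Type*} [NormedAddCommGroup X]
    [NormedSpace 𝕜 X] (S : Set X) : Set X :=
  {w | ∃ (θ : 𝕜) (z : X), ‖θ‖ = 1 ∧ z ∈ S ∧ w = θ • z}

/-- Lushness of a Banach space. -/
def Lush (𝕜 : Type*) [RCLike 𝕜] (X : Type*) [NormedAddCommGroup X] [NormedSpace 𝕜 X]
    [NormedSpace ℝ X] : Prop :=
  ∀ x y : X, ‖x‖ = 1 → ‖y‖ = 1 → ∀ ε : ℝ, 0 < ε → ∃ f : X →L[𝕜] 𝕜, ‖f‖ = 1 ∧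
    y ∈ sphereSlice 𝕜 f ε ∧
    infDist x (convexHull ℝ (circleSmul 𝕜 (sphereSlice 𝕜 f ε))) < ε


/-! ### Auxiliary machinery for the proof -/

section ADPaux

set_option linter.unusedSectionVars false
set_option linter.unusedVariables false
set_option maxHeartbeats 1000000

open RCLike

variable {𝕜 X : Type*} [RCLike 𝕜] [NormedAddCommGroup X] [NormedSpace 𝕜 X]
  [NormedSpace ℝ X] [IsScalarTower ℝ 𝕜 X]

lemma aux_bddAbove {T : X → X} {C : NNReal} (hC : LipschitzWith C T) :
    BddAbove {r : ℝ | ∃ x₁ x₂ : X, x₁ ≠ x₂ ∧ r = ‖T x₁ - T x₂‖ / ‖x₁ - x₂‖} := by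
  refine ⟨(C : ℝ), ?_⟩
  rintro r ⟨x₁, x₂, hne, rfl⟩
  have hd : (0:ℝ) < ‖x₁ - x₂‖ := by
    rw [norm_pos_iff]; exact sub_ne_zero.mpr hne
  rw [div_le_iff₀ hd]
  have := hC.dist_le_mul x₁ x₂
  rwa [dist_eq_norm, dist_eq_norm] at this

lemma aux_lipSemi_nonneg (T : X → X) : 0 ≤ lipSemi T := by
  apply Real.sSup_nonneg
  rintro r ⟨x₁, x₂, hne, rfl⟩
  positivity

lemma aux_quot_le_lipSemi {T : X → X} {C : NNReal} (hC : LipschitzWith C T)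
    {x₁ x₂ : X} (hne : x₁ ≠ x₂) :
    ‖T x₁ - T x₂‖ / ‖x₁ - x₂‖ ≤ lipSemi T :=
  le_csSup (aux_bddAbove hC) ⟨x₁, x₂, hne, rfl⟩

/-- The perturbed map `x ↦ x + θ • T x` is Lipschitz. -/
lemma aux_lipschitz_pert {T : X → X} {C : NNReal} (hC : LipschitzWith C T) (θ : 𝕜)
    (hθ : ‖θ‖ = 1) : LipschitzWith (1 + C) (fun x : X => x + θ • T x) := by
  apply LipschitzWith.of_dist_le_mul
  intro x y
  simp only [dist_eq_norm]
  have h1 : (x + θ • T x) - (y + θ • T y) = (x - y) + θ • (T x - T y) := by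
    rw [smul_sub]; abel
  rw [h1]
  refine (norm_add_le _ _).trans ?_
  rw [norm_smul, hθ, one_mul]
  have := hC.dist_le_mul x y
  rw [dist_eq_norm, dist_eq_norm] at this
  push_cast
  linarith

/-- Upper bound: `lipSemi (Id + θ T) ≤ 1 + lipSemi T`. -/
lemma aux_upper {T : X → X} {C : NNReal} (hC : LipschitzWith C T) (θ : 𝕜) (hθ : ‖θ‖ = 1) :
    lipSemi (fun x : X => x + θ • T x) ≤ 1 + lipSemi T := by
  apply Real.sSup_le
  · rintro r ⟨x₁, x₂, hne, rfl⟩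
    have hd : (0:ℝ) < ‖x₁ - x₂‖ := by
      rw [norm_pos_iff]; exact sub_ne_zero.mpr hne
    have h1 : (fun x : X => x + θ • T x) x₁ - (fun x : X => x + θ • T x) x₂
        = (x₁ - x₂) + θ • (T x₁ - T x₂) := by
      simp only []
      rw [smul_sub]; abel
    rw [h1]
    have h2 : ‖(x₁ - x₂) + θ • (T x₁ - T x₂)‖ ≤ ‖x₁ - x₂‖ + ‖T x₁ - T x₂‖ := by
      refine (norm_add_le _ _).trans ?_
      rw [norm_smul, hθ, one_mul]
    calc ‖(x₁ - x₂) + θ • (T x₁ - T x₂)‖ / ‖x₁ - x₂‖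
        ≤ (‖x₁ - x₂‖ + ‖T x₁ - T x₂‖) / ‖x₁ - x₂‖ := by gcongr
      _ = 1 + ‖T x₁ - T x₂‖ / ‖x₁ - x₂‖ := by
          rw [add_div, div_self hd.ne']
      _ ≤ 1 + lipSemi T := by
          have := aux_quot_le_lipSemi hC hne
          linarith
  · have := aux_lipSemi_nonneg T
    linarith

/-- Lower bound from a single pair. -/
lemma aux_pair_le {T : X → X} {C : NNReal} (hC : LipschitzWith C T) (θ : 𝕜) (hθ : ‖θ‖ = 1)
    {x₁ x₂ : X} (hne : x₁ ≠ x₂) :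
    ‖(x₁ - x₂) + θ • (T x₁ - T x₂)‖ / ‖x₁ - x₂‖ ≤ lipSemi (fun x : X => x + θ • T x) := by
  have hb : BddAbove {r : ℝ | ∃ y₁ y₂ : X, y₁ ≠ y₂ ∧
      r = ‖(fun x : X => x + θ • T x) y₁ - (fun x : X => x + θ • T x) y₂‖ / ‖y₁ - y₂‖} := by
    have h := aux_bddAbove (T := fun x : X => x + θ • T x) (aux_lipschitz_pert hC θ hθ)
    exact h
  refine le_csSup hb ⟨x₁, x₂, hne, ?_⟩
  congr 1
  simp only []
  rw [smul_sub]; abel_nf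


/-- Maximal directional slope functional of a scalar Lipschitz function. -/
noncomputable def pfun (h : X → ℝ) (w : X) : ℝ :=
  sSup {r : ℝ | ∃ (x : X) (t : ℝ), 0 < t ∧ r = (h (x + t • w) - h x) / t}

variable {h : X → ℝ} {K : ℝ}

lemma pfun_set_nonempty (h : X → ℝ) (w : X) :
    {r : ℝ | ∃ (x : X) (t : ℝ), 0 < t ∧ r = (h (x + t • w) - h x) / t}.Nonempty :=
  ⟨(h (0 + (1:ℝ) • w) - h 0) / 1, 0, 1, one_pos, rfl⟩

lemma pfun_bddAbove (hLip : ∀ x y : X, |h x - h y| ≤ K * ‖x - y‖) (w : X) :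
    BddAbove {r : ℝ | ∃ (x : X) (t : ℝ), 0 < t ∧ r = (h (x + t • w) - h x) / t} := by
  refine ⟨K * ‖w‖, ?_⟩
  rintro r ⟨x, t, ht, rfl⟩
  rw [div_le_iff₀ ht]
  calc h (x + t • w) - h x ≤ |h (x + t • w) - h x| := le_abs_self _
    _ ≤ K * ‖x + t • w - x‖ := hLip _ _
    _ = K * ‖w‖ * t := by
        rw [add_sub_cancel_left, norm_smul, Real.norm_eq_abs, abs_of_pos ht]; ring

lemma pfun_le (hLip : ∀ x y : X, |h x - h y| ≤ K * ‖x - y‖) (w : X) :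
    pfun h w ≤ K * ‖w‖ := by
  apply csSup_le (pfun_set_nonempty h w)
  rintro r ⟨x, t, ht, rfl⟩
  rw [div_le_iff₀ ht]
  calc h (x + t • w) - h x ≤ |h (x + t • w) - h x| := le_abs_self _
    _ ≤ K * ‖x + t • w - x‖ := hLip _ _
    _ = K * ‖w‖ * t := by
        rw [add_sub_cancel_left, norm_smul, Real.norm_eq_abs, abs_of_pos ht]; ring

lemma pfun_ge (hLip : ∀ x y : X, |h x - h y| ≤ K * ‖x - y‖) (w x : X) {t : ℝ} (ht : 0 < t) :
    (h (x + t • w) - h x) / t ≤ pfun h w :=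
  le_csSup (pfun_bddAbove hLip w) ⟨x, t, ht, rfl⟩

lemma pfun_exists_lt (hLip : ∀ x y : X, |h x - h y| ≤ K * ‖x - y‖) {w : X} {b : ℝ}
    (hb : b < pfun h w) :
    ∃ (x : X) (t : ℝ), 0 < t ∧ b < (h (x + t • w) - h x) / t := by
  obtain ⟨r, ⟨x, t, ht, rfl⟩, hr⟩ := exists_lt_of_lt_csSup (pfun_set_nonempty h w) hb
  exact ⟨x, t, ht, hr⟩

lemma pfun_zero (h : X → ℝ) : pfun h (0 : X) = 0 := by
  have : {r : ℝ | ∃ (x : X) (t : ℝ), 0 < t ∧ r = (h (x + t • (0:X)) - h x) / t} = {0} := by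
    ext r
    simp only [mem_setOf_eq, mem_singleton_iff]
    constructor
    · rintro ⟨x, t, ht, rfl⟩
      simp
    · rintro rfl
      exact ⟨0, 1, one_pos, by simp⟩
  rw [pfun, this, csSup_singleton]

lemma pfun_add (hLip : ∀ x y : X, |h x - h y| ≤ K * ‖x - y‖) (w₁ w₂ : X) :
    pfun h (w₁ + w₂) ≤ pfun h w₁ + pfun h w₂ := by
  apply csSup_le (pfun_set_nonempty h (w₁ + w₂))
  rintro r ⟨x, t, ht, rfl⟩
  have key : (h (x + t • (w₁ + w₂)) - h x) / t
      = (h ((x + t • w₂) + t • w₁) - h (x + t • w₂)) / t + (h (x + t • w₂) - h x) / t := by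
    rw [← add_div]
    congr 1
    have : x + t • (w₁ + w₂) = (x + t • w₂) + t • w₁ := by
      rw [smul_add]; abel
    rw [this]; ring
  rw [key]
  exact add_le_add (pfun_ge hLip w₁ _ ht) (pfun_ge hLip w₂ _ ht)

lemma pfun_smul (hLip : ∀ x y : X, |h x - h y| ≤ K * ‖x - y‖) (w : X) {c : ℝ} (hc : 0 < c) :
    pfun h (c • w) = c * pfun h w := by
  have aux : ∀ (c : ℝ), 0 < c → ∀ w : X, pfun h (c • w) ≤ c * pfun h w := by
    intro c hc w
    apply csSup_le (pfun_set_nonempty h (c • w))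
    rintro r ⟨x, t, ht, rfl⟩
    have h1 : (h (x + t • c • w) - h x) / t = c * ((h (x + (t * c) • w) - h x) / (t * c)) := by
      rw [smul_smul]
      field_simp
    rw [h1]
    have := pfun_ge hLip w x (mul_pos ht hc)
    nlinarith [this, hc]
  refine le_antisymm (aux c hc w) ?_
  have h2 := aux c⁻¹ (by positivity) (c • w)
  rw [inv_smul_smul₀ hc.ne'] at h2
  calc c * pfun h w ≤ c * (c⁻¹ * pfun h (c • w)) := by
        have hcpos := hc
        nlinarith [h2]
    _ = pfun h (c • w) := by field_simp


lemma exists_dominating (hLip : ∀ x y : X, |h x - h y| ≤ K * ‖x - y‖)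
    (w₀ : X) (hw₀ : w₀ ≠ 0) :
    ∃ Y : X →L[𝕜] 𝕜, (∀ x : X, re (Y x) ≤ pfun h x) ∧ re (Y w₀) = pfun h w₀ := by
  have hp0 : 0 ≤ pfun h w₀ + pfun h (-w₀) := by
    have := pfun_add hLip w₀ (-w₀)
    rw [add_neg_cancel, pfun_zero] at this
    linarith
  -- the partial linear map on the span of w₀
  set f : X →ₗ.[ℝ] ℝ := LinearPMap.mkSpanSingleton w₀ (pfun h w₀) hw₀ with hf
  have hdom : ∀ x : f.domain, f x ≤ pfun h (x : X) := by
    rintro ⟨v, hv⟩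
    obtain ⟨c, rfl⟩ := Submodule.mem_span_singleton.1 hv
    have happ : f ⟨c • w₀, hv⟩ = c • pfun h w₀ := LinearPMap.mkSpanSingleton'_apply _ _ _ c _
    rw [happ]
    rcases lt_trichotomy c 0 with hc | hc | hc
    · have h1 : pfun h (c • w₀) = (-c) * pfun h (-w₀) := by
        have : c • w₀ = (-c) • (-w₀) := by simp
        rw [this, pfun_smul hLip _ (by linarith)]
      rw [h1, smul_eq_mul]
      nlinarith
    · subst hc
      simp [pfun_zero]
    · rw [pfun_smul hLip _ hc, smul_eq_mul]
  obtain ⟨g, hg_eq, hg_le⟩ := exists_extension_of_le_sublinear f (pfun h)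
    (fun c hc x => pfun_smul hLip x hc) (pfun_add hLip) hdom
  -- continuity of g
  have hgbound : ∀ x : X, ‖g x‖ ≤ K * ‖x‖ := by
    intro x
    rw [Real.norm_eq_abs, abs_le]
    constructor
    · have h1 : g (-x) ≤ pfun h (-x) := hg_le (-x)
      have h2 : pfun h (-x) ≤ K * ‖-x‖ := pfun_le hLip (-x)
      rw [norm_neg] at h2
      have : g (-x) = -g x := by rw [map_neg]
      linarith [this ▸ h1]
    · exact (hg_le x).trans (pfun_le hLip x)
  set gc : X →L[ℝ] ℝ := LinearMap.mkContinuous g K hgbound with hgc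
  refine ⟨gc.extendTo𝕜', ?_, ?_⟩
  · intro x
    have hre : re ((gc.extendTo𝕜' : X →L[𝕜] 𝕜) x) = gc x :=
      LinearMap.extendTo𝕜'_apply_re gc.toLinearMap x
    rw [hre]
    exact hg_le x
  · have hre : re ((gc.extendTo𝕜' : X →L[𝕜] 𝕜) w₀) = gc w₀ :=
      LinearMap.extendTo𝕜'_apply_re gc.toLinearMap w₀
    rw [hre]
    have h1 : gc w₀ = f ⟨w₀, Submodule.mem_span_singleton_self w₀⟩ :=
      hg_eq ⟨w₀, Submodule.mem_span_singleton_self w₀⟩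
    have h2 : f ⟨w₀, Submodule.mem_span_singleton_self w₀⟩ = pfun h w₀ :=
      LinearPMap.mkSpanSingleton_apply ℝ ℝ hw₀ (pfun h w₀)
    rw [h1, h2]


/-- The rank-one alignment step obtained from the alternative Daugavet property:
given a unit vector `vh` and a norm-one functional `H`, there are `z` (almost norming `H`),
a unimodular `κ` and a norm-one functional `F` almost norming both `z` and `κ • vh`. -/
lemma adp_step (hX : AltDaugavetProperty 𝕜 X) (vh : X) (hv : ‖vh‖ = 1)
    (H : X →L[𝕜] 𝕜) (hH : ‖H‖ = 1) {δ : ℝ} (hδ : 0 < δ) (hδ1 : δ ≤ 1) :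
    ∃ (z : X) (κ : 𝕜) (F : X →L[𝕜] 𝕜), ‖z‖ ≤ 1 ∧ 1 - δ < ‖H z‖ ∧ ‖κ‖ = 1 ∧ ‖F‖ = 1 ∧
      1 - δ < re (F z) ∧ 1 - δ < re (F (κ • vh)) := by
  classical
  set R : X →L[𝕜] X := H.smulRight vh with hR
  have hRrank : RankOne 𝕜 R := ⟨H, vh, fun x => rfl⟩
  have hnR : ‖R‖ = 1 := by
    rw [hR, ContinuousLinearMap.norm_smulRight_apply, hH, hv, one_mul]
  obtain ⟨θ, hθ, hθeq⟩ := (hX R hRrank).1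
  -- ‖id + θ R‖ = 2
  have h2 : (2 : ℝ) = ‖ContinuousLinearMap.id 𝕜 X + θ • R‖ := by
    rw [← hθeq, hnR]; norm_num
  set δ' : ℝ := δ / 2 with hδ'
  have hδ'pos : 0 < δ' := by positivity
  have hlt : 2 - δ' < ‖ContinuousLinearMap.id 𝕜 X + θ • R‖ := by
    rw [← h2]; linarith
  obtain ⟨z, hz1, hzlt⟩ := ContinuousLinearMap.exists_lt_apply_of_lt_opNorm _ hlt
  have happ : (ContinuousLinearMap.id 𝕜 X + θ • R) z = z + (θ * H z) • vh := by
    simp [hR, ContinuousLinearMap.smulRight_apply, smul_smul]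
  rw [happ] at hzlt
  set c : 𝕜 := θ * H z with hc
  have hcle : ‖c‖ ≤ 1 := by
    have : ‖H z‖ ≤ 1 := by
      calc ‖H z‖ ≤ ‖H‖ * ‖z‖ := H.le_opNorm z
        _ ≤ 1 := by rw [hH]; linarith
    calc ‖c‖ = ‖θ‖ * ‖H z‖ := norm_mul _ _
      _ ≤ 1 := by rw [hθ]; linarith
  have htri : ‖z + c • vh‖ ≤ ‖z‖ + ‖c‖ := by
    refine (norm_add_le _ _).trans ?_
    rw [norm_smul, hv, mul_one]
  have hcgt : 1 - δ' < ‖c‖ := by linarith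
  have hzgt : 1 - δ' < ‖z‖ := by linarith
  have hHz : 1 - δ < ‖H z‖ := by
    have : ‖c‖ = ‖H z‖ := by rw [hc, norm_mul, hθ, one_mul]
    rw [← this]; linarith
  have hcne : c ≠ 0 := by
    intro hc0
    rw [hc0, norm_zero] at hcgt
    linarith
  -- the norming functional
  have hvecne : z + c • vh ≠ 0 := by
    intro h0
    rw [h0, norm_zero] at hzlt
    linarith
  obtain ⟨F, hF1, hFeq⟩ := exists_dual_vector 𝕜 _ (norm_ne_zero_iff.mpr hvecne)
  have hFre : re (F z) + re (F (c • vh)) = ‖z + c • vh‖ := by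
    have : F (z + c • vh) = (‖z + c • vh‖ : 𝕜) := hFeq
    have h3 : re (F (z + c • vh)) = ‖z + c • vh‖ := by
      rw [this, ofReal_re]
    rw [← h3, map_add, map_add]
  have hFz1 : re (F z) ≤ 1 := by
    calc re (F z) ≤ ‖F z‖ := re_le_norm _
      _ ≤ ‖F‖ * ‖z‖ := F.le_opNorm z
      _ ≤ 1 := by rw [hF1]; linarith
  have hFc1 : re (F (c • vh)) ≤ 1 := by
    calc re (F (c • vh)) ≤ ‖F (c • vh)‖ := re_le_norm _
      _ ≤ ‖F‖ * ‖c • vh‖ := F.le_opNorm _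
      _ ≤ 1 := by
          rw [hF1, one_mul, norm_smul, hv, mul_one]; exact hcle
  have hFz : 1 - δ' < re (F z) := by linarith
  have hFcv : 1 - δ' < re (F (c • vh)) := by linarith
  set κ : 𝕜 := (‖c‖ : 𝕜)⁻¹ * c with hκ
  have hcpos : (0:ℝ) < ‖c‖ := by linarith
  have hκ1 : ‖κ‖ = 1 := by
    rw [hκ, norm_mul, norm_inv, norm_ofReal, abs_of_pos hcpos]
    exact inv_mul_cancel₀ hcpos.ne' 
  have hFκ : 1 - δ < re (F (κ • vh)) := by
    have hkey : F (κ • vh) = (‖c‖ : 𝕜)⁻¹ * F (c • vh) := by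
      rw [hκ, mul_smul, map_smul, smul_eq_mul]
    have hrepos : 0 < re (F (c • vh)) := by linarith
    have hscale : re (F (κ • vh)) = ‖c‖⁻¹ * re (F (c • vh)) := by
      rw [hkey]
      have : ((‖c‖ : 𝕜))⁻¹ = ((‖c‖⁻¹ : ℝ) : 𝕜) := by
        rw [ofReal_inv]
      rw [this, re_ofReal_mul]
    rw [hscale]
    have hinv : 1 ≤ ‖c‖⁻¹ := by
      rw [le_inv_comm₀ (by norm_num) (by linarith)]
      · simpa using hcle
    calc 1 - δ < 1 - δ' := by linarith
      _ < re (F (c • vh)) := hFcv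
      _ = 1 * re (F (c • vh)) := (one_mul _).symm
      _ ≤ ‖c‖⁻¹ * re (F (c • vh)) := by
          apply mul_le_mul_of_nonneg_right hinv (le_of_lt hrepos)
  exact ⟨z, κ, F, hz1.le, hHz, hκ1, hF1, by linarith, hFκ⟩


/-- Norm of a scalar multiple of a continuous linear map. -/
lemma norm_smul_clm {𝕜 X : Type*} [RCLike 𝕜] [NormedAddCommGroup X] [NormedSpace 𝕜 X]
    (c : 𝕜) (Y : X →L[𝕜] 𝕜) : ‖c • Y‖ = ‖c‖ * ‖Y‖ := by
  rcases eq_or_ne c 0 with rfl | hc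
  · rw [zero_smul 𝕜 Y, norm_zero, norm_zero, zero_mul]
  · refine le_antisymm (Y.opNorm_smul_le c) ?_
    have hcpos : 0 < ‖c‖ := norm_pos_iff.mpr hc
    have h2 : ‖Y‖ = ‖c⁻¹ • (c • Y)‖ := by rw [inv_smul_smul₀ hc]
    have h3 : ‖c⁻¹ • (c • Y)‖ ≤ ‖c‖⁻¹ * ‖c • Y‖ := by
      have h4 := (c • Y).opNorm_smul_le c⁻¹
      rwa [norm_inv] at h4
    calc ‖c‖ * ‖Y‖ ≤ ‖c‖ * (‖c‖⁻¹ * ‖c • Y‖) := by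
          apply mul_le_mul_of_nonneg_left (h2 ▸ h3) hcpos.le
      _ = ‖c • Y‖ := by field_simp

/-- `𝕜`-functionals are `ℝ`-homogeneous in the appropriate sense. -/
lemma g_real_smul (g : X →L[𝕜] 𝕜) (r : ℝ) (w : X) : g (r • w) = (r : 𝕜) * g w := by
  have h1 : g (r • w) = r • g w := map_smul (g.restrictScalars ℝ) r w
  rw [h1, real_smul_eq_coe_mul]

lemma re_g_real_smul (g : X →L[𝕜] 𝕜) (r : ℝ) (w : X) :
    re (g (r • w)) = r * re (g w) := by
  rw [g_real_smul, re_ofReal_mul]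

/-- The scalar function `h = re ∘ g ∘ T` and its Lipschitz bound. -/
lemma h_lip {T : X → X} {C : NNReal} (hC : LipschitzWith C T) (g : X →L[𝕜] 𝕜) :
    ∀ x y : X, |re (g (T x)) - re (g (T y))| ≤ (‖g‖ * C) * ‖x - y‖ := by
  intro x y
  have h1 : re (g (T x)) - re (g (T y)) = re (g (T x - T y)) := by
    rw [map_sub, map_sub]
  rw [h1]
  calc |re (g (T x - T y))| ≤ ‖g (T x - T y)‖ := abs_re_le_norm _
    _ ≤ ‖g‖ * ‖T x - T y‖ := g.le_opNorm _
    _ ≤ ‖g‖ * ((C : ℝ) * ‖x - y‖) := by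
        have := hC.dist_le_mul x y
        rw [dist_eq_norm, dist_eq_norm] at this
        exact mul_le_mul_of_nonneg_left this (norm_nonneg g)
    _ = (‖g‖ * C) * ‖x - y‖ := by ring

/-- Slope quotient as `re ∘ g` of the slope element. -/
lemma quot_eq_re_slope (g : X →L[𝕜] 𝕜) (T : X → X) (x₁ x₂ : X) (hd : 0 < ‖x₁ - x₂‖) :
    (re (g (T x₁)) - re (g (T x₂))) / ‖x₁ - x₂‖
      = re (g (‖x₁ - x₂‖⁻¹ • (T x₁ - T x₂))) := by
  rw [re_g_real_smul]
  have h1 : re (g (T x₁ - T x₂)) = re (g (T x₁)) - re (g (T x₂)) := by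
    rw [map_sub, map_sub]
  rw [h1]
  field_simp

/-- The main geometric step: given a slice of the slope set and a unit vector `vh`,
produce a refined unit vector `vh'` and a unit direction `u` carrying a pair whose slope
lies in the slice, such that any norm-one functional almost norming `vh'` almost norms
(in modulus) both `vh` and `u`. -/
lemma step_lemma (hX : AltDaugavetProperty 𝕜 X) {T : X → X} {C : NNReal}
    (hC : LipschitzWith C T) (g : X →L[𝕜] 𝕜) (α : ℝ)
    (hSne : ∃ a ∈ lipSlope T, α < re (g a))
    (vh : X) (hvh : ‖vh‖ = 1) {γ : ℝ} (hγ : 0 < γ) (hγ1 : γ ≤ 1/4) :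
    ∃ (vh' u : X), ‖vh'‖ = 1 ∧ ‖u‖ = 1 ∧
      (∃ z ∈ lipSlope T, α < re (g z) ∧
        ∃ (x : X) (t : ℝ), 0 < t ∧ z = ‖(x + t • u) - x‖⁻¹ • (T (x + t • u) - T x)) ∧
      (∃ F : X →L[𝕜] 𝕜, ‖F‖ ≤ 1 ∧ 1 - γ ≤ ‖F vh'‖) ∧
      (∀ f : X →L[𝕜] 𝕜, ‖f‖ ≤ 1 → 1 - γ ≤ ‖f vh'‖ →
        1 - 4*γ ≤ ‖f vh‖ ∧ 1 - 4*γ ≤ ‖f u‖) := by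
  classical
  set h : X → ℝ := fun x => re (g (T x)) with hh
  set K : ℝ := ‖g‖ * C with hK
  have hLip : ∀ x y : X, |h x - h y| ≤ K * ‖x - y‖ := h_lip hC g
  -- a good direction w₀ with pfun h w₀ > α
  obtain ⟨a, ⟨x₁, x₂, hne, haeq⟩, hag⟩ := hSne
  have hd : (0:ℝ) < ‖x₁ - x₂‖ := by rw [norm_pos_iff]; exact sub_ne_zero.mpr hne
  set w₀ : X := ‖x₁ - x₂‖⁻¹ • (x₁ - x₂) with hw₀def
  have hw₀norm : ‖w₀‖ = 1 := by
    rw [hw₀def, norm_smul, norm_inv, norm_norm]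
    field_simp
  have hw₀ne : w₀ ≠ 0 := by
    intro h0; rw [h0, norm_zero] at hw₀norm; norm_num at hw₀norm
  have hpw₀ : α < pfun h w₀ := by
    have hxw : x₂ + ‖x₁ - x₂‖ • w₀ = x₁ := by
      rw [hw₀def, smul_smul, mul_inv_cancel₀ hd.ne', one_smul]
      abel
    have hquot : (h (x₂ + ‖x₁ - x₂‖ • w₀) - h x₂) / ‖x₁ - x₂‖ = re (g a) := by
      rw [hxw, haeq, hh]
      exact quot_eq_re_slope g T x₁ x₂ hd
    calc α < re (g a) := hag
      _ = (h (x₂ + ‖x₁ - x₂‖ • w₀) - h x₂) / ‖x₁ - x₂‖ := hquot.symm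
      _ ≤ pfun h w₀ := pfun_ge hLip w₀ x₂ hd
  -- Hahn-Banach dominated functional
  obtain ⟨Y, hY_le, hY_eq⟩ := exists_dominating (𝕜 := 𝕜) hLip w₀ hw₀ne
  -- the norm-one functional H
  obtain ⟨G₀, hG₀, -⟩ := exists_dual_vector 𝕜 w₀ (norm_ne_zero_iff.mpr hw₀ne)
  set H : X →L[𝕜] 𝕜 := if hY : Y = 0 then G₀ else ((‖Y‖⁻¹ : ℝ) : 𝕜) • Y with hHdef
  have hHnorm : ‖H‖ = 1 := by
    rw [hHdef]
    split_ifs with hY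
    · exact hG₀
    · have hpos : (0:ℝ) < ‖Y‖ := norm_pos_iff.mpr hY
      have hns : ‖(((‖Y‖⁻¹ : ℝ) : 𝕜) • Y)‖ = ‖((‖Y‖⁻¹ : ℝ) : 𝕜)‖ * ‖Y‖ := norm_smul_clm _ _
      rw [hns, norm_ofReal, abs_of_pos (inv_pos.mpr hpos)]
      exact inv_mul_cancel₀ hpos.ne'
  have hαY : 0 ≤ α → α < ‖Y‖ := by
    intro hα
    have h1 : α < re (Y w₀) := by rw [hY_eq]; exact hpw₀
    calc α < re (Y w₀) := h1
      _ ≤ ‖Y w₀‖ := re_le_norm _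
      _ ≤ ‖Y‖ * ‖w₀‖ := Y.le_opNorm _
      _ = ‖Y‖ := by rw [hw₀norm, mul_one]
  set δ : ℝ := if 0 ≤ α then min γ ((‖Y‖ - α) / (2 * ‖Y‖)) else γ with hδdef
  have hδpos : 0 < δ := by
    rw [hδdef]
    split_ifs with hα
    · have hY1 := hαY hα
      have hYpos : 0 < ‖Y‖ := lt_of_le_of_lt hα hY1
      exact lt_min hγ (div_pos (by linarith) (by linarith))
    · exact hγ
  have hδγ : δ ≤ γ := by
    rw [hδdef]; split_ifs with hα
    · exact min_le_left _ _
    · exact le_refl γ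
  have hδ1 : δ ≤ 1 := le_trans hδγ (by linarith)
  obtain ⟨z, κ, F, hz1, hHz, hκ1, hF1, hFz, hFκ⟩ := adp_step hX vh hvh H hHnorm hδpos hδ1
  have hHz0 : (0:ℝ) < ‖H z‖ := lt_of_le_of_lt (by linarith) hHz
  have hzne : z ≠ 0 := by
    intro h0; rw [h0, map_zero, norm_zero] at hHz0; exact lt_irrefl _ hHz0
  have hznorm_pos : 0 < ‖z‖ := norm_pos_iff.mpr hzne
  have hzinv : 1 ≤ ‖z‖⁻¹ := by
    rw [le_inv_comm₀ one_pos hznorm_pos]; simpa using hz1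
  -- alignment phase μ
  set μ : 𝕜 := if hYz : Y z = 0 then 1 else (starRingEnd 𝕜) (Y z) / (‖Y z‖ : 𝕜) with hμdef
  have hμ1 : ‖μ‖ = 1 := by
    rw [hμdef]
    split_ifs with hYz
    · exact norm_one
    · have hp : (0:ℝ) < ‖Y z‖ := norm_pos_iff.mpr hYz
      rw [norm_div, norm_conj, norm_ofReal, abs_of_pos hp]
      exact div_self hp.ne'
  have hμY : re (Y (μ • z)) = ‖Y z‖ := by
    rw [map_smul, smul_eq_mul, hμdef]
    split_ifs with hYz
    · simp [hYz]
    · have hp : (0:ℝ) < ‖Y z‖ := norm_pos_iff.mpr hYz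
      rw [div_mul_eq_mul_div, RCLike.conj_mul]
      rw [← ofReal_pow, ← ofReal_div, ofReal_re]
      rw [sq]
      field_simp
  set u : X := ‖z‖⁻¹ • (μ • z) with hudef
  have hunorm : ‖u‖ = 1 := by
    rw [hudef, norm_smul, norm_smul, hμ1, one_mul, Real.norm_eq_abs,
      abs_of_pos (inv_pos.mpr hznorm_pos)]
    exact inv_mul_cancel₀ hznorm_pos.ne'
  have hYu : re (Y u) = ‖z‖⁻¹ * ‖Y z‖ := by
    rw [hudef, re_g_real_smul, hμY]
  -- pfun h u > α
  have hpu : α < pfun h u := by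
    rcases le_or_gt 0 α with hα | hα
    · have hYne : Y ≠ 0 := by
        intro h0
        have h2 := hαY hα
        rw [h0, norm_zero] at h2
        linarith
      have hYpos : (0:ℝ) < ‖Y‖ := norm_pos_iff.mpr hYne
      have hHY : H = ((‖Y‖⁻¹ : ℝ) : 𝕜) • Y := by rw [hHdef, dif_neg hYne]
      have hYz_eq : ‖Y z‖ = ‖Y‖ * ‖H z‖ := by
        rw [hHY]
        have : (((‖Y‖⁻¹ : ℝ) : 𝕜) • Y) z = ((‖Y‖⁻¹ : ℝ) : 𝕜) * Y z := by
          rw [ContinuousLinearMap.smul_apply, smul_eq_mul]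
        rw [this, norm_mul, norm_ofReal, abs_of_pos (inv_pos.mpr hYpos)]
        field_simp
      have hδle : δ ≤ (‖Y‖ - α) / (2 * ‖Y‖) := by
        rw [hδdef, if_pos hα]; exact min_le_right _ _
      have hαlt := hαY hα
      have key : α < ‖Y z‖ := by
        rw [hYz_eq]
        have e1 : ‖Y‖ * (1 - δ) < ‖Y‖ * ‖H z‖ := mul_lt_mul_of_pos_left hHz hYpos
        have e2 : ‖Y‖ * (1 - (‖Y‖ - α) / (2 * ‖Y‖)) ≤ ‖Y‖ * (1 - δ) :=
          mul_le_mul_of_nonneg_left (by linarith) hYpos.le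
        have e3 : ‖Y‖ * (1 - (‖Y‖ - α) / (2 * ‖Y‖)) = (‖Y‖ + α) / 2 := by
          field_simp; ring
        linarith
      calc α < ‖Y z‖ := key
        _ = 1 * ‖Y z‖ := (one_mul _).symm
        _ ≤ ‖z‖⁻¹ * ‖Y z‖ := mul_le_mul_of_nonneg_right hzinv (norm_nonneg _)
        _ = re (Y u) := hYu.symm
        _ ≤ pfun h u := hY_le u
    · calc α < 0 := hα
        _ ≤ ‖z‖⁻¹ * ‖Y z‖ := by positivity
        _ = re (Y u) := hYu.symm
        _ ≤ pfun h u := hY_le u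
  -- extract the pair
  obtain ⟨x, t, ht, hxt⟩ := pfun_exists_lt hLip hpu
  have hnorm_tu : ‖(x + t • u) - x‖ = t := by
    rw [add_sub_cancel_left, norm_smul, Real.norm_eq_abs, abs_of_pos ht, hunorm, mul_one]
  have htu_ne : x + t • u ≠ x := by
    intro h0
    have h1 : ‖(x + t • u) - x‖ = 0 := by rw [h0, sub_self, norm_zero]
    rw [hnorm_tu] at h1
    linarith
  have hzsl_re : α < re (g (‖(x + t • u) - x‖⁻¹ • (T (x + t • u) - T x))) := by
    have hq := quot_eq_re_slope g T (x + t • u) x (by rw [hnorm_tu]; exact ht)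
    have h2 : (h (x + t • u) - h x) / t
        = (re (g (T (x + t • u))) - re (g (T x))) / ‖(x + t • u) - x‖ := by
      rw [hnorm_tu, hh]
    rw [h2, hq] at hxt
    exact hxt
  -- construction of vh'
  set s : ℝ := ‖κ • vh + z‖ with hs
  have hFadd : re (F (κ • vh)) + re (F z) = re (F (κ • vh + z)) := by
    rw [map_add, map_add]
  have hsge : 2 - 2*δ < s := by
    have h1 : re (F (κ • vh + z)) ≤ ‖F (κ • vh + z)‖ := re_le_norm _
    have h2 : ‖F (κ • vh + z)‖ ≤ ‖κ • vh + z‖ := by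
      calc ‖F (κ • vh + z)‖ ≤ ‖F‖ * ‖κ • vh + z‖ := F.le_opNorm _
        _ = ‖κ • vh + z‖ := by rw [hF1, one_mul]
    rw [hs]
    linarith
  have hsle : s ≤ 2 := by
    rw [hs]
    calc ‖κ • vh + z‖ ≤ ‖κ • vh‖ + ‖z‖ := norm_add_le _ _
      _ ≤ 2 := by rw [norm_smul, hκ1, one_mul, hvh]; linarith
  have hspos : 0 < s := by linarith
  set vh' : X := s⁻¹ • (κ • vh + z) with hvh'def
  have hvh'norm : ‖vh'‖ = 1 := by
    rw [hvh'def, norm_smul, Real.norm_eq_abs, abs_of_pos (inv_pos.mpr hspos), ← hs]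
    exact inv_mul_cancel₀ hspos.ne'
  -- norm ratio for functionals
  have hratio : ∀ f : X →L[𝕜] 𝕜, ‖f (κ • vh + z)‖ = s * ‖f vh'‖ := by
    intro f
    rw [hvh'def]
    have h1 : f (s⁻¹ • (κ • vh + z)) = ((s⁻¹ : ℝ) : 𝕜) * f (κ • vh + z) := g_real_smul f _ _
    rw [h1, norm_mul, norm_ofReal, abs_of_pos (inv_pos.mpr hspos)]
    field_simp
  refine ⟨vh', u, hvh'norm, hunorm, ?_, ?_, ?_⟩
  · exact ⟨_, ⟨x + t • u, x, htu_ne, rfl⟩, hzsl_re, x, t, ht, rfl⟩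
  · refine ⟨F, le_of_eq hF1, ?_⟩
    have h1 : re (F vh') = s⁻¹ * re (F (κ • vh + z)) := by
      rw [hvh'def, re_g_real_smul]
    have h2 : 2 - 2*δ < re (F (κ • vh + z)) := by
      rw [← hFadd]; linarith
    have h3 : (0:ℝ) < 2 - 2*δ := by linarith
    have h5 : (2:ℝ)⁻¹ ≤ s⁻¹ := by
      apply inv_anti₀ hspos hsle
    have h4 : 1 - γ ≤ re (F vh') := by
      calc 1 - γ ≤ 1 - δ := by linarith
        _ = 2⁻¹ * (2 - 2*δ) := by ring
        _ ≤ s⁻¹ * (2 - 2*δ) := mul_le_mul_of_nonneg_right h5 h3.le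
        _ ≤ s⁻¹ * re (F (κ • vh + z)) :=
            mul_le_mul_of_nonneg_left h2.le (inv_nonneg.mpr hspos.le)
        _ = re (F vh') := h1.symm
    calc 1 - γ ≤ re (F vh') := h4
      _ ≤ ‖F vh'‖ := re_le_norm _
  · intro f hf hfvh'
    have h6 : 2 - 2*γ ≤ s := by linarith
    have h7 : (0:ℝ) ≤ 1 - γ := by linarith
    have hbig : (2 - 2*γ) * (1 - γ) ≤ ‖f (κ • vh + z)‖ := by
      rw [hratio f]
      exact mul_le_mul h6 hfvh' h7 hspos.le
    have hfz_le : ‖f z‖ ≤ 1 := by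
      calc ‖f z‖ ≤ ‖f‖ * ‖z‖ := f.le_opNorm _
        _ ≤ 1 * 1 := mul_le_mul hf hz1 (norm_nonneg _) zero_le_one
        _ = 1 := one_mul 1
    have hκvh1 : ‖κ • vh‖ = 1 := by rw [norm_smul, hκ1, one_mul, hvh]
    have hfκvh_le : ‖f (κ • vh)‖ ≤ 1 := by
      calc ‖f (κ • vh)‖ ≤ ‖f‖ * ‖κ • vh‖ := f.le_opNorm _
        _ ≤ 1 * 1 := mul_le_mul hf (le_of_eq hκvh1) (norm_nonneg _) zero_le_one
        _ = 1 := one_mul 1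
    have hsplit : ‖f (κ • vh + z)‖ ≤ ‖f (κ • vh)‖ + ‖f z‖ := by
      rw [map_add]; exact norm_add_le _ _
    have hexp : (2 - 2*γ) * (1 - γ) = 2 - 4*γ + 2*γ^2 := by ring
    have hg2 : (0:ℝ) ≤ γ^2 := sq_nonneg γ
    have hfκvh : 1 - 4*γ ≤ ‖f (κ • vh)‖ := by linarith
    have hfz : 1 - 4*γ ≤ ‖f z‖ := by linarith
    constructor
    · have : ‖f (κ • vh)‖ = ‖f vh‖ := by
        rw [map_smul, smul_eq_mul, norm_mul, hκ1, one_mul]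
      rwa [this] at hfκvh
    · have h8 : ‖f u‖ = ‖z‖⁻¹ * ‖f z‖ := by
        rw [hudef]
        have h9 : f (‖z‖⁻¹ • (μ • z)) = ((‖z‖⁻¹ : ℝ) : 𝕜) * f (μ • z) := g_real_smul f _ _
        rw [h9, norm_mul, norm_ofReal, abs_of_pos (inv_pos.mpr hznorm_pos)]
        congr 1
        rw [map_smul, smul_eq_mul, norm_mul, hμ1, one_mul]
      rw [h8]
      calc 1 - 4*γ ≤ ‖f z‖ := hfz
        _ = 1 * ‖f z‖ := (one_mul _).symm
        _ ≤ ‖z‖⁻¹ * ‖f z‖ := by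
            apply mul_le_mul_of_nonneg_right hzinv (norm_nonneg _)


lemma real_smul_comm (θ : 𝕜) (t : ℝ) (z : X) : θ • (t • z) = t • (θ • z) := by
  rw [← algebraMap_smul 𝕜 t z, ← algebraMap_smul 𝕜 t (θ • z), smul_smul, smul_smul, mul_comm]

/-- The core approximation lemma. -/
lemma core_lemma (hX : AltDaugavetProperty 𝕜 X) {T : X → X} {C : NNReal}
    (hC : LipschitzWith C T) (hscd : IsSCD 𝕜 (lipSlope T))
    (hnt : Nontrivial X) (hL : 0 < lipSemi T) {ε : ℝ} (hε : 0 < ε) :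
    ∃ θ : 𝕜, ‖θ‖ = 1 ∧ ∃ x₁ x₂ : X, x₁ ≠ x₂ ∧
      1 + lipSemi T - ε < ‖(x₁ - x₂) + θ • (T x₁ - T x₂)‖ / ‖x₁ - x₂‖ := by
  classical
  set L : ℝ := lipSemi T with hLdef
  -- constants
  set ε₁ : ℝ := min (ε/4) (L/2) with hε₁def
  have hε₁pos : 0 < ε₁ := lt_min (by linarith) (by linarith)
  have hε₁a : ε₁ ≤ ε/4 := min_le_left _ _
  have hε₁b : ε₁ ≤ L/2 := min_le_right _ _
  set δh : ℝ := ε₁ / 4 with hδhdef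
  have hδhpos : 0 < δh := by positivity
  set γ₀ : ℝ := min (ε/4) (min (1/4) (ε₁ / (4 * (L + 1)))) with hγ₀def
  have hγ₀pos : 0 < γ₀ := by
    apply lt_min (by linarith)
    apply lt_min (by norm_num)
    positivity
  have hγ₀a : γ₀ ≤ ε/4 := min_le_left _ _
  have hγ₀b : γ₀ ≤ 1/4 := le_trans (min_le_right _ _) (min_le_left _ _)
  have hγ₀c : γ₀ ≤ ε₁ / (4 * (L + 1)) := le_trans (min_le_right _ _) (min_le_right _ _)
  have hγ₀L : γ₀ * L ≤ ε₁ / 4 := by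
    have h1 : γ₀ * L ≤ (ε₁ / (4 * (L + 1))) * L :=
      mul_le_mul_of_nonneg_right hγ₀c hL.le
    have h2 : (ε₁ / (4 * (L + 1))) * L ≤ ε₁ / 4 := by
      rw [div_mul_eq_mul_div, div_le_div_iff₀ (by positivity) (by norm_num)]
      nlinarith
    linarith
  -- the geometric levels
  set Γ : ℕ → ℝ := fun n => γ₀ * (4⁻¹ : ℝ)^n with hΓdef
  have hΓpos : ∀ n, 0 < Γ n := by
    intro n; rw [hΓdef]; positivity
  have hΓle : ∀ n, Γ n ≤ γ₀ := by
    intro n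
    rw [hΓdef]
    calc γ₀ * (4⁻¹:ℝ)^n ≤ γ₀ * 1 := by
          apply mul_le_mul_of_nonneg_left _ hγ₀pos.le
          apply pow_le_one₀ (by norm_num) (by norm_num)
      _ = γ₀ := mul_one _
  have hΓ14 : ∀ n, Γ n ≤ 1/4 := fun n => le_trans (hΓle n) hγ₀b
  have hΓrec : ∀ n, 4 * Γ (n+1) = Γ n := by
    intro n
    rw [hΓdef]
    simp only [pow_succ]
    ring
  -- a heavy slope element
  have hqne : {r : ℝ | ∃ x₁ x₂ : X, x₁ ≠ x₂ ∧ r = ‖T x₁ - T x₂‖ / ‖x₁ - x₂‖}.Nonempty := by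
    obtain ⟨x, y, hxy⟩ := exists_pair_ne X
    exact ⟨_, x, y, hxy, rfl⟩
  have hheavy : L - δh < L := by linarith
  obtain ⟨r, ⟨y₁, y₂, hy_ne, hr_eq⟩, hr_gt⟩ := exists_lt_of_lt_csSup hqne hheavy
  have hyd : (0:ℝ) < ‖y₁ - y₂‖ := by rw [norm_pos_iff]; exact sub_ne_zero.mpr hy_ne
  set a₀ : X := ‖y₁ - y₂‖⁻¹ • (T y₁ - T y₂) with ha₀def
  have ha₀mem : a₀ ∈ lipSlope T := ⟨y₁, y₂, hy_ne, rfl⟩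
  have ha₀norm : L - δh < ‖a₀‖ := by
    rw [ha₀def, norm_smul, Real.norm_eq_abs, abs_of_pos (inv_pos.mpr hyd)]
    rw [hr_eq] at hr_gt
    rw [inv_mul_eq_div]
    exact hr_gt
  have ha₀pos : 0 < ‖a₀‖ := by
    have : 0 < L - δh := by
      rw [hδhdef]
      have : ε₁ ≤ L/2 := hε₁b
      linarith
    linarith
  have ha₀ne : a₀ ≠ 0 := norm_pos_iff.mp ha₀pos
  set xh0 : X := ‖a₀‖⁻¹ • a₀ with hxh0def
  have hxh0norm : ‖xh0‖ = 1 := by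
    rw [hxh0def, norm_smul, Real.norm_eq_abs, abs_of_pos (inv_pos.mpr ha₀pos)]
    exact inv_mul_cancel₀ ha₀pos.ne'
  -- SCD data
  obtain ⟨S, hslice, hdet⟩ := hscd
  have hch : ∀ n, ∃ (g : X →L[𝕜] 𝕜) (α : ℝ),
      (∃ a ∈ lipSlope T, α < re (g a)) ∧ (S n = {x ∈ lipSlope T | α < re (g x)}) := by
    intro n
    obtain ⟨hne, g, α, hg0, hSeq⟩ := hslice n
    refine ⟨g, α, ?_, hSeq⟩
    obtain ⟨a, ha⟩ := hne
    rw [hSeq] at ha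
    exact ⟨a, ha.1, ha.2⟩
  choose gs αs hSne hSeq using hch
  -- the chain of unit vectors
  have step : ∀ (n : ℕ) (v : X), ‖v‖ = 1 → ∃ (vh' u : X), ‖vh'‖ = 1 ∧ ‖u‖ = 1 ∧
      (∃ z ∈ lipSlope T, αs n < re (gs n z) ∧
        ∃ (x : X) (t : ℝ), 0 < t ∧ z = ‖(x + t • u) - x‖⁻¹ • (T (x + t • u) - T x)) ∧
      (∃ F : X →L[𝕜] 𝕜, ‖F‖ ≤ 1 ∧ 1 - Γ (n+1) ≤ ‖F vh'‖) ∧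
      (∀ f : X →L[𝕜] 𝕜, ‖f‖ ≤ 1 → 1 - Γ (n+1) ≤ ‖f vh'‖ →
        1 - 4*(Γ (n+1)) ≤ ‖f v‖ ∧ 1 - 4*(Γ (n+1)) ≤ ‖f u‖) := by
    intro n v hv
    exact step_lemma hX hC (gs n) (αs n) (hSne n) v hv (hΓpos (n+1)) (hΓ14 (n+1))
  choose! Fv Fu hstep using step
  set vs : ℕ → X := fun n => Nat.rec xh0 (fun k ih => Fv k ih) n with hvsdef
  have hvs0 : vs 0 = xh0 := rfl
  have hvs_succ : ∀ n, vs (n+1) = Fv n (vs n) := fun n => rfl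
  have hvsnorm : ∀ n, ‖vs n‖ = 1 := by
    intro n
    induction n with
    | zero => exact hxh0norm
    | succ k ih => exact (hstep k (vs k) ih).1
  set us : ℕ → X := fun n => Fu n (vs n) with husdef
  have hP : ∀ n, ‖vs (n+1)‖ = 1 ∧ ‖us n‖ = 1 ∧
      (∃ z ∈ lipSlope T, αs n < re (gs n z) ∧
        ∃ (x : X) (t : ℝ), 0 < t ∧ z = ‖(x + t • (us n)) - x‖⁻¹ • (T (x + t • (us n)) - T x)) ∧
      (∃ F : X →L[𝕜] 𝕜, ‖F‖ ≤ 1 ∧ 1 - Γ (n+1) ≤ ‖F (vs (n+1))‖) ∧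
      (∀ f : X →L[𝕜] 𝕜, ‖f‖ ≤ 1 → 1 - Γ (n+1) ≤ ‖f (vs (n+1))‖ →
        1 - 4*(Γ (n+1)) ≤ ‖f (vs n)‖ ∧ 1 - 4*(Γ (n+1)) ≤ ‖f (us n)‖) := by
    intro n
    exact hstep n (vs n) (hvsnorm n)
  -- weak-star compactness: a functional almost norming all chain vectors
  have hproper : ProperSpace 𝕜 := FiniteDimensional.proper_rclike 𝕜 𝕜
  set Kt : ℕ → Set (WeakDual 𝕜 X) := fun n =>
    {φ : WeakDual 𝕜 X | (∀ x : X, ‖φ x‖ ≤ ‖x‖) ∧ 1 - Γ n ≤ ‖φ (vs n)‖} with hKtdef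
  have hKt_closed : ∀ n, IsClosed (Kt n) := by
    intro n
    have h1 : Kt n = (⋂ x : X, {φ : WeakDual 𝕜 X | ‖φ x‖ ≤ ‖x‖}) ∩
        {φ : WeakDual 𝕜 X | 1 - Γ n ≤ ‖φ (vs n)‖} := by
      ext φ
      simp only [hKtdef, mem_setOf_eq, mem_inter_iff, mem_iInter]
    rw [h1]
    apply IsClosed.inter
    · apply isClosed_iInter
      intro x
      exact isClosed_le ((WeakDual.eval_continuous x).norm) continuous_const
    · exact isClosed_le continuous_const ((WeakDual.eval_continuous (vs n)).norm)
  have hKt_sub_ball : ∀ n, Kt n ⊆ WeakDual.toStrongDual ⁻¹' closedBall 0 1 := by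
    intro n φ hφ
    simp only [mem_preimage, mem_closedBall, dist_zero_right]
    apply ContinuousLinearMap.opNorm_le_bound _ zero_le_one
    intro x
    rw [one_mul]
    exact hφ.1 x
  have hKt_compact : ∀ n, IsCompact (Kt n) := fun n =>
    (WeakDual.isCompact_closedBall (0 : StrongDual 𝕜 X) 1).of_isClosed_subset
      (hKt_closed n) (hKt_sub_ball n)
  have hKt_ne : ∀ n, (Kt n).Nonempty := by
    intro n
    cases n with
    | zero =>
      have hxh0ne : xh0 ≠ 0 := by
        intro h0; rw [h0, norm_zero] at hxh0norm; norm_num at hxh0norm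
      obtain ⟨G₀, hG₀n, hG₀eq⟩ := exists_dual_vector 𝕜 xh0 (norm_ne_zero_iff.mpr hxh0ne)
      refine ⟨StrongDual.toWeakDual G₀, ?_, ?_⟩
      · intro x
        calc ‖(StrongDual.toWeakDual G₀) x‖ = ‖G₀ x‖ := rfl
          _ ≤ ‖G₀‖ * ‖x‖ := G₀.le_opNorm x
          _ = ‖x‖ := by rw [hG₀n, one_mul]
      · have h2 : ‖(StrongDual.toWeakDual G₀) (vs 0)‖ = 1 := by
          have : (StrongDual.toWeakDual G₀) (vs 0) = G₀ xh0 := rfl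
          rw [this, hG₀eq, hxh0norm, norm_ofReal]
          norm_num
        rw [h2]
        have := hΓpos 0
        linarith
    | succ k =>
      obtain ⟨F, hF_le, hF_norm⟩ := (hP k).2.2.2.1
      refine ⟨StrongDual.toWeakDual F, ?_, ?_⟩
      · intro x
        calc ‖(StrongDual.toWeakDual F) x‖ = ‖F x‖ := rfl
          _ ≤ ‖F‖ * ‖x‖ := F.le_opNorm x
          _ ≤ ‖x‖ := by
              have := norm_nonneg x
              nlinarith
      · exact hF_norm
  have hKt_anti : ∀ n, Kt (n+1) ⊆ Kt n := by
    intro n φ hφ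
    have hf1 : ‖WeakDual.toStrongDual φ‖ ≤ 1 := by
      apply ContinuousLinearMap.opNorm_le_bound _ zero_le_one
      intro x
      rw [one_mul]
      exact hφ.1 x
    have himp := (hP n).2.2.2.2 (WeakDual.toStrongDual φ) hf1 hφ.2
    refine ⟨hφ.1, ?_⟩
    have h3 := himp.1
    rw [hΓrec n] at h3
    exact h3
  obtain ⟨φ, hφmem⟩ := IsCompact.nonempty_iInter_of_sequence_nonempty_isCompact_isClosed
    Kt hKt_anti hKt_ne (hKt_compact 0) hKt_closed
  have hφ : ∀ n, φ ∈ Kt n := by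
    intro n
    exact mem_iInter.mp hφmem n
  set f : X →L[𝕜] 𝕜 := WeakDual.toStrongDual φ with hfdef
  have hf1 : ‖f‖ ≤ 1 := by
    apply ContinuousLinearMap.opNorm_le_bound _ zero_le_one
    intro x
    rw [one_mul]
    exact (hφ 0).1 x
  have hfv : ∀ n, 1 - Γ n ≤ ‖f (vs n)‖ := fun n => (hφ n).2
  have hfu : ∀ n, 1 - Γ n ≤ ‖f (us n)‖ := by
    intro n
    have himp := (hP n).2.2.2.2 f hf1 (hfv (n+1))
    have h3 := himp.2
    rw [hΓrec n] at h3
    exact h3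
  have hfx0 : 1 - γ₀ ≤ ‖f xh0‖ := by
    have h1 := hfv 0
    have h2 : Γ 0 = γ₀ := by rw [hΓdef]; simp
    rw [h2] at h1
    exact h1
  -- determination: some slice avoids the small-|f| region
  have hRtrick : ∃ n, ∀ b ∈ S n, L - ε₁ < ‖f b‖ := by
    by_contra hcon
    push_neg at hcon
    set B : Set X := {a ∈ lipSlope T | ‖f a‖ ≤ L - ε₁} with hBdef
    have hBsub : B ⊆ lipSlope T := fun a ha => ha.1
    have hBint : ∀ n, (B ∩ S n).Nonempty := by
      intro n
      obtain ⟨b, hbS, hble⟩ := hcon n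
      have hbA : b ∈ lipSlope T := by
        have := hSeq n
        rw [this] at hbS
        exact hbS.1
      exact ⟨b, ⟨hbA, hble⟩, hbS⟩
    have hAsub := hdet B hBsub hBint
    -- the closed convex region
    set Cs : Set X := {x : X | ‖f x‖ ≤ L - ε₁} with hCsdef
    have hCs_conv : Convex ℝ Cs := by
      intro x hx y hy a b ha hb hab
      simp only [hCsdef, mem_setOf_eq] at hx hy ⊢
      have h4 : f (a • x + b • y) = ((a:ℝ):𝕜) * f x + ((b:ℝ):𝕜) * f y := by
        rw [map_add, g_real_smul f a x, g_real_smul f b y]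
      calc ‖f (a • x + b • y)‖ ≤ ‖((a:ℝ):𝕜) * f x‖ + ‖((b:ℝ):𝕜) * f y‖ := by
            rw [h4]; exact norm_add_le _ _
        _ = a * ‖f x‖ + b * ‖f y‖ := by
            rw [norm_mul, norm_mul, norm_ofReal, norm_ofReal, abs_of_nonneg ha,
              abs_of_nonneg hb]
        _ ≤ a * (L - ε₁) + b * (L - ε₁) := by
            apply add_le_add
            · exact mul_le_mul_of_nonneg_left hx ha
            · exact mul_le_mul_of_nonneg_left hy hb
        _ = L - ε₁ := by rw [← add_mul, hab, one_mul]
    have hCs_closed : IsClosed Cs := by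
      apply isClosed_le
      · exact f.continuous.norm
      · exact continuous_const
    have ha₀Cs : a₀ ∈ Cs := by
      have h5 : closure (convexHull ℝ B) ⊆ Cs := by
        apply closure_minimal _ hCs_closed
        apply convexHull_min _ hCs_conv
        intro b hb
        exact hb.2
      exact h5 (hAsub ha₀mem)
    -- but ‖f a₀‖ is large
    have hlarge : L - ε₁ < ‖f a₀‖ := by
      have h6 : f a₀ = ((‖a₀‖ : ℝ) : 𝕜) * f xh0 := by
        have h7 : a₀ = ‖a₀‖ • xh0 := by
          rw [hxh0def, smul_smul, mul_inv_cancel₀ ha₀pos.ne', one_smul]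
        calc f a₀ = f (‖a₀‖ • xh0) := by rw [← h7]
          _ = ((‖a₀‖ : ℝ) : 𝕜) * f xh0 := g_real_smul f _ _
      have h8 : ‖f a₀‖ = ‖a₀‖ * ‖f xh0‖ := by
        rw [h6, norm_mul, norm_ofReal, abs_of_pos ha₀pos]
      rw [h8]
      have h9 : (L - δh) * (1 - γ₀) ≤ ‖a₀‖ * ‖f xh0‖ := by
        apply mul_le_mul ha₀norm.le hfx0 (by linarith) (norm_nonneg a₀)
      have h10 : L - ε₁ < (L - δh) * (1 - γ₀) := by
        have h11 : (L - δh) * (1 - γ₀) = L - δh - γ₀ * L + δh * γ₀ := by ring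
        rw [h11, hδhdef]
        nlinarith
      linarith
    rw [hCsdef] at ha₀Cs
    simp only [mem_setOf_eq] at ha₀Cs
    linarith
  obtain ⟨nb, hnb⟩ := hRtrick
  -- the final pair
  obtain ⟨z, hzA, hzre, x, t, ht, hzeq⟩ := (hP nb).2.2.1
  have hzS : z ∈ S nb := by
    rw [hSeq nb]
    exact ⟨hzA, hzre⟩
  have hfz : L - ε₁ < ‖f z‖ := hnb z hzS
  have hfu' : 1 - γ₀ ≤ ‖f (us nb)‖ := le_trans (by have := hΓle nb; linarith) (hfu nb)
  set u : X := us nb with hudef2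
  have hunorm : ‖u‖ = 1 := (hP nb).2.1
  have hγ₀lt1 : γ₀ < 1 := by linarith [hγ₀b]
  have hfupos : (0:ℝ) < ‖f u‖ := by
    have h1 : (0:ℝ) < 1 - γ₀ := by linarith
    linarith [hfu']
  have hfzpos : (0:ℝ) < ‖f z‖ := by
    have h1 : (0:ℝ) < L - ε₁ := by linarith [hε₁b]
    linarith
  have hfune : f u ≠ 0 := norm_pos_iff.mp hfupos
  have hfzne : f z ≠ 0 := norm_pos_iff.mp hfzpos
  set θ : 𝕜 := (f u * (starRingEnd 𝕜) (f z)) / ((‖f u‖ : ℝ) * (‖f z‖ : ℝ) : ℝ) with hθdef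
  have hθnorm : ‖θ‖ = 1 := by
    rw [hθdef, norm_div, norm_mul, norm_conj, norm_ofReal,
      abs_of_pos (mul_pos hfupos hfzpos)]
    field_simp
  have hfu_c : ((‖f u‖ : ℝ) : 𝕜) ≠ 0 := by
    rw [ofReal_ne_zero]; exact hfupos.ne'
  have hfz_c : ((‖f z‖ : ℝ) : 𝕜) ≠ 0 := by
    rw [ofReal_ne_zero]; exact hfzpos.ne'
  have hθz : θ * f z = f u * ((‖f z‖ / ‖f u‖ : ℝ) : 𝕜) := by
    have e1 : θ * f z
        = f u * ((starRingEnd 𝕜) (f z) * f z) / (((‖f u‖:ℝ):𝕜) * ((‖f z‖:ℝ):𝕜)) := by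
      rw [hθdef, ofReal_mul]; ring
    rw [e1, RCLike.conj_mul, ofReal_div, sq]
    field_simp
  have hsum : ‖f u + θ * f z‖ = ‖f u‖ + ‖f z‖ := by
    have h1 : f u + θ * f z = f u * ((1 + ‖f z‖ / ‖f u‖ : ℝ) : 𝕜) := by
      rw [hθz]
      push_cast
      ring
    rw [h1, norm_mul, norm_ofReal, abs_of_pos (by positivity)]
    field_simp
  have hfsum : f (u + θ • z) = f u + θ * f z := by
    rw [map_add, map_smul, smul_eq_mul]
  have hlb : 1 + L - ε < ‖u + θ • z‖ := by
    have h1 : ‖f (u + θ • z)‖ ≤ ‖u + θ • z‖ := by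
      calc ‖f (u + θ • z)‖ ≤ ‖f‖ * ‖u + θ • z‖ := f.le_opNorm _
        _ ≤ 1 * ‖u + θ • z‖ := mul_le_mul_of_nonneg_right hf1 (norm_nonneg _)
        _ = ‖u + θ • z‖ := one_mul _
    have h2 : ‖f (u + θ • z)‖ = ‖f u‖ + ‖f z‖ := by rw [hfsum, hsum]
    have h3 : 1 + L - ε < ‖f u‖ + ‖f z‖ := by
      have e1 : 1 - γ₀ ≤ ‖f u‖ := hfu'
      have e2 : L - ε₁ < ‖f z‖ := hfz
      linarith
    linarith
  have hdnorm : ‖(x + t • u) - x‖ = t := by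
    rw [add_sub_cancel_left, norm_smul, Real.norm_eq_abs, abs_of_pos ht, hunorm, mul_one]
  refine ⟨θ, hθnorm, x + t • u, x, ?_, ?_⟩
  · intro h0
    have h1 : ‖(x + t • u) - x‖ = 0 := by rw [h0, sub_self, norm_zero]
    rw [hdnorm] at h1
    linarith
  · have hTd : T (x + t • u) - T x = t • z := by
      rw [hzeq, hdnorm, smul_smul, mul_inv_cancel₀ ht.ne', one_smul]
    have hxd : (x + t • u) - x = t • u := add_sub_cancel_left _ _
    rw [hxd, hTd]
    have hnum : t • u + θ • (t • z) = t • (u + θ • z) := by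
      rw [real_smul_comm θ t z, smul_add]
    have htu : ‖t • u‖ = t := by
      rw [norm_smul, Real.norm_eq_abs, abs_of_pos ht, hunorm, mul_one]
    rw [hnum, htu, norm_smul, Real.norm_eq_abs, abs_of_pos ht]
    rw [mul_comm, mul_div_assoc, div_self ht.ne', mul_one]
    exact hlb




end ADPaux

set_option maxHeartbeats 1000000 in
/-- In a space with the alternative Daugavet property, every Lipschitz map with SCD
slope satisfies the alternative Daugavet equation. -/
theorem alt_daugavet_eq_of_scd_slope {𝕜 X : Type*} [RCLike 𝕜] [NormedAddCommGroup X] [NormedSpace 𝕜 X]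
    [NormedSpace ℝ X] [IsScalarTower ℝ 𝕜 X] [CompleteSpace X]
    (hX : AltDaugavetProperty 𝕜 X) (T : X → X) (hT : ∃ C, LipschitzWith C T)
    (hscd : IsSCD 𝕜 (lipSlope T)) :
    IsGreatest {r : ℝ | ∃ θ : 𝕜, ‖θ‖ = 1 ∧ r = lipSemi (fun x : X => x + θ • T x)}
      (1 + lipSemi T) := by

  classical
  obtain ⟨C, hC⟩ := hT
  -- X is nontrivial
  have hnt : Nontrivial X := by
    rcases subsingleton_or_nontrivial X with hs | hn
    · exfalso
      have h0 : RankOne 𝕜 (0 : X →L[𝕜] X) := ⟨0, 0, fun x => by simp⟩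
      obtain ⟨θ, hθ, hr⟩ := (hX 0 h0).1
      have hid0 : (ContinuousLinearMap.id 𝕜 X + θ • (0 : X →L[𝕜] X)) = 0 := by
        ext x
        exact Subsingleton.elim _ _
      rw [hid0, norm_zero] at hr
      norm_num at hr
    · exact hn
  constructor
  · -- membership
    rcases eq_or_lt_of_le (aux_lipSemi_nonneg T) with hL0 | hL
    · -- degenerate case : lipSemi T = 0, T is constant
      have hconst : ∀ a b : X, T a = T b := by
        intro a b
        by_cases hab : a = b
        · rw [hab]
        · have h1 := aux_quot_le_lipSemi hC hab
          rw [← hL0] at h1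
          have h2 : 0 ≤ ‖T a - T b‖ / ‖a - b‖ := by positivity
          have h3 : ‖T a - T b‖ / ‖a - b‖ = 0 := le_antisymm h1 h2
          have hd : (0:ℝ) < ‖a - b‖ := by
            rw [norm_pos_iff]; exact sub_ne_zero.mpr hab
          rcases div_eq_zero_iff.mp h3 with h4 | h4
          · exact sub_eq_zero.mp (norm_eq_zero.mp h4)
          · exact absurd h4 hd.ne'
      refine ⟨1, norm_one, ?_⟩
      have hset : {r : ℝ | ∃ x₁ x₂ : X, x₁ ≠ x₂ ∧
          r = ‖(x₁ + (1:𝕜) • T x₁) - (x₂ + (1:𝕜) • T x₂)‖ / ‖x₁ - x₂‖} = {(1:ℝ)} := by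
        ext r
        simp only [mem_setOf_eq, mem_singleton_iff]
        constructor
        · rintro ⟨x₁, x₂, hne, rfl⟩
          have hd : (0:ℝ) < ‖x₁ - x₂‖ := by
            rw [norm_pos_iff]; exact sub_ne_zero.mpr hne
          have h5 : (x₁ + (1:𝕜) • T x₁) - (x₂ + (1:𝕜) • T x₂) = x₁ - x₂ := by
            rw [one_smul, one_smul, hconst x₁ x₂]
            abel
          rw [h5, div_self hd.ne']
        · rintro rfl
          obtain ⟨x₀, hx₀⟩ := exists_ne (0 : X)
          refine ⟨x₀, 0, hx₀, ?_⟩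
          have hd : (0:ℝ) < ‖x₀ - 0‖ := by
            rw [norm_pos_iff]; exact sub_ne_zero.mpr hx₀
          have h5 : (x₀ + (1:𝕜) • T x₀) - ((0:X) + (1:𝕜) • T 0) = x₀ - 0 := by
            rw [one_smul, one_smul, hconst x₀ 0]
            abel
          rw [h5, div_self hd.ne']
      have hval : lipSemi (fun x : X => x + (1:𝕜) • T x) = 1 := by
        show sSup {r : ℝ | ∃ x₁ x₂ : X, x₁ ≠ x₂ ∧
          r = ‖(x₁ + (1:𝕜) • T x₁) - (x₂ + (1:𝕜) • T x₂)‖ / ‖x₁ - x₂‖} = 1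
        rw [hset, csSup_singleton]
      rw [hval, ← hL0, add_zero]
    · -- main case
      have hproper : ProperSpace 𝕜 := FiniteDimensional.proper_rclike 𝕜 𝕜
      set φf : 𝕜 → ℝ := fun θ => lipSemi (fun x : X => x + θ • T x) with hφfdef
      have hquotC : ∀ x₁ x₂ : X, x₁ ≠ x₂ → ‖T x₁ - T x₂‖ / ‖x₁ - x₂‖ ≤ (C : ℝ) := by
        intro x₁ x₂ hne
        have hd : (0:ℝ) < ‖x₁ - x₂‖ := by
          rw [norm_pos_iff]; exact sub_ne_zero.mpr hne
        rw [div_le_iff₀ hd]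
        have := hC.dist_le_mul x₁ x₂
        rwa [dist_eq_norm, dist_eq_norm] at this
      have hφlip : ∀ θ θ' : 𝕜, ‖θ‖ = 1 → ‖θ'‖ = 1 →
          φf θ ≤ φf θ' + ‖θ - θ'‖ * (C : ℝ) := by
        intro θ θ' hθ hθ'
        apply Real.sSup_le
        · rintro r ⟨x₁, x₂, hne, rfl⟩
          have hd : (0:ℝ) < ‖x₁ - x₂‖ := by
            rw [norm_pos_iff]; exact sub_ne_zero.mpr hne
          have hbeta : (fun x : X => x + θ • T x) x₁ - (fun x : X => x + θ • T x) x₂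
              = (x₁ - x₂) + θ • (T x₁ - T x₂) := by
            simp only []
            rw [smul_sub]; abel
          rw [hbeta]
          have hsplit : (x₁ - x₂) + θ • (T x₁ - T x₂)
              = ((x₁ - x₂) + θ' • (T x₁ - T x₂)) + (θ - θ') • (T x₁ - T x₂) := by
            rw [sub_smul]; abel
          have hnum : ‖(x₁ - x₂) + θ • (T x₁ - T x₂)‖
              ≤ ‖(x₁ - x₂) + θ' • (T x₁ - T x₂)‖ + ‖θ - θ'‖ * ‖T x₁ - T x₂‖ := by
            rw [hsplit]
            refine (norm_add_le _ _).trans ?_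
            rw [norm_smul]
          calc ‖(x₁ - x₂) + θ • (T x₁ - T x₂)‖ / ‖x₁ - x₂‖
              ≤ (‖(x₁ - x₂) + θ' • (T x₁ - T x₂)‖ + ‖θ - θ'‖ * ‖T x₁ - T x₂‖) / ‖x₁ - x₂‖ := by
                gcongr
            _ = ‖(x₁ - x₂) + θ' • (T x₁ - T x₂)‖ / ‖x₁ - x₂‖
                + ‖θ - θ'‖ * (‖T x₁ - T x₂‖ / ‖x₁ - x₂‖) := by
                rw [add_div, mul_div_assoc]
            _ ≤ φf θ' + ‖θ - θ'‖ * (C : ℝ) := by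
                apply add_le_add
                · exact aux_pair_le hC θ' hθ' hne
                · exact mul_le_mul_of_nonneg_left (hquotC x₁ x₂ hne) (norm_nonneg _)
        · have h1 := aux_lipSemi_nonneg (fun x : X => x + θ' • T x)
          have h2 : 0 ≤ ‖θ - θ'‖ * (C : ℝ) := by positivity
          -- φf θ' = lipSemi (...)
          have h3 : φf θ' = lipSemi (fun x : X => x + θ' • T x) := rfl
          linarith [h3 ▸ h1]
      have hcont : ContinuousOn φf (sphere (0:𝕜) 1) := by
        apply LipschitzOnWith.continuousOn (K := C)
        apply LipschitzOnWith.of_dist_le_mul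
        intro θ hθ θ' hθ'
        rw [mem_sphere_zero_iff_norm] at hθ hθ'
        rw [Real.dist_eq, dist_eq_norm, abs_le]
        constructor
        · have := hφlip θ' θ hθ' hθ
          rw [← norm_neg (θ' - θ), neg_sub] at this
          linarith
        · have := hφlip θ θ' hθ hθ'
          linarith
      have hsne : (sphere (0:𝕜) 1).Nonempty := by
        refine ⟨1, ?_⟩
        rw [mem_sphere_zero_iff_norm, norm_one]
      obtain ⟨θm, hθm_mem, hθm_max⟩ := (isCompact_sphere (0:𝕜) 1).exists_isMaxOn hsne hcont
      have hθm : ‖θm‖ = 1 := mem_sphere_zero_iff_norm.mp hθm_mem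
      refine ⟨θm, hθm, ?_⟩
      -- show 1 + lipSemi T = φf θm
      have hle : φf θm ≤ 1 + lipSemi T := aux_upper hC θm hθm
      have hge : 1 + lipSemi T ≤ φf θm := by
        by_contra hlt
        push_neg at hlt
        set ε : ℝ := 1 + lipSemi T - φf θm with hεdef
        have hεpos : 0 < ε := by rw [hεdef]; linarith
        obtain ⟨θ', hθ', x₁, x₂, hne, hgt⟩ := core_lemma hX hC hscd hnt hL hεpos
        have h4 : ‖(x₁ - x₂) + θ' • (T x₁ - T x₂)‖ / ‖x₁ - x₂‖ ≤ φf θ' :=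
          aux_pair_le hC θ' hθ' hne
        have h5 : φf θ' ≤ φf θm := by
          apply hθm_max
          rw [mem_sphere_zero_iff_norm]
          exact hθ'
        rw [hεdef] at hgt
        have h6 : 1 + lipSemi T - (1 + lipSemi T - φf θm) = φf θm := by ring
        rw [h6] at hgt
        linarith
      exact (le_antisymm hle hge).symm
  · rintro r ⟨θ, hθ, rfl⟩
    exact aux_upper hC θ hθ
end

section
/- Let X be a Banach space with the alternative Daugavet property and let T: X → X be a Lipschitz map. Then there is a closed separable linear subspace E ⊆ X having the alternative Daugavet property such that T(E) ⊆ E and the Lipschitz seminorm of the restriction T|_E equals the Lipschitz seminorm of T. -/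
open Set Metric Topology

section ADPAux
section ADPHelpers

open RCLike

variable {𝕜 : Type*} [RCLike 𝕜] {Y : Type*} [NormedAddCommGroup Y] [NormedSpace 𝕜 Y]

def ADPAset (𝕜 : Type*) [RCLike 𝕜] {Y : Type*} [NormedAddCommGroup Y] [NormedSpace 𝕜 Y]
    (x : Y) (ε : ℝ) : Set Y :=
  {y | ‖y‖ ≤ 1 ∧ ∃ θ : 𝕜, ‖θ‖ = 1 ∧ 2 - ε < ‖x + θ • y‖}

lemma adp_norm_id (h : AltDaugavetProperty 𝕜 Y) : ‖ContinuousLinearMap.id 𝕜 Y‖ = 1 := by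
  obtain ⟨⟨θ, hθ, hr⟩, -⟩ := h 0 ⟨0, 0, by simp⟩
  simpa using hr.symm

lemma adp_nontrivial (h : AltDaugavetProperty 𝕜 Y) : Nontrivial Y := by
  by_contra hnt
  rw [not_nontrivial_iff_subsingleton] at hnt
  have h1 := adp_norm_id h
  have h2 : (ContinuousLinearMap.id 𝕜 Y) = 0 := Subsingleton.elim _ _
  rw [h2, norm_zero] at h1
  norm_num at h1

lemma self_mem_ADPAset {x : Y} (hx : ‖x‖ = 1) {ε : ℝ} (hε : 0 < ε) : x ∈ ADPAset 𝕜 x ε := by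
  refine ⟨hx.le, 1, by simp, ?_⟩
  have : x + (1 : 𝕜) • x = (2 : 𝕜) • x := by
    rw [one_smul, two_smul]
  rw [this, norm_smul, hx, mul_one]
  have : ‖(2:𝕜)‖ = 2 := by simp
  rw [this]; linarith

end ADPHelpers

section Geom
open RCLike
variable {𝕜 : Type*} [RCLike 𝕜] {Y : Type*} [NormedAddCommGroup Y] [NormedSpace 𝕜 Y]
  [NormedSpace ℝ Y] [IsScalarTower ℝ 𝕜 Y]

lemma clm_norm_const_smul (a : 𝕜) (g : Y →L[𝕜] 𝕜) : ‖a • g‖ = ‖a‖ * ‖g‖ :=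
  norm_smul a g

lemma adp_geom (h : AltDaugavetProperty 𝕜 Y) {x : Y} (hx : ‖x‖ = 1) {ε : ℝ} (hε : 0 < ε)
    {y : Y} (hy : ‖y‖ ≤ 1) : y ∈ closure (convexHull ℝ (ADPAset 𝕜 x ε)) := by
  by_contra hyC
  obtain ⟨g, u, hCu, huy⟩ := RCLike.geometric_hahn_banach_closed_point (𝕜 := 𝕜)
    ((convex_convexHull ℝ _).closure) isClosed_closure hyC
  have hxC : x ∈ closure (convexHull ℝ (ADPAset 𝕜 x ε)) :=
    subset_closure (subset_convexHull ℝ _ (self_mem_ADPAset hx hε))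
  have hβy : re (g y) ≤ ‖g‖ := by
    calc re (g y) ≤ ‖g y‖ := re_le_norm _
    _ ≤ ‖g‖ * ‖y‖ := g.le_opNorm y
    _ ≤ ‖g‖ := mul_le_of_le_one_right (norm_nonneg g) hy
  have huβ : u < ‖g‖ := huy.trans_le hβy
  have hβpos : (0:ℝ) < ‖g‖ := by
    by_contra hb
    push_neg at hb
    have hg0 : g = 0 := by
      rw [← ContinuousLinearMap.opNorm_zero_iff]
      exact le_antisymm hb (norm_nonneg g)
    have h0u := hCu x hxC
    rw [hg0] at h0u
    simp only [ContinuousLinearMap.zero_apply, map_zero] at h0u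
    linarith
  set β := ‖g‖ with hβ
  set δ : ℝ := min (ε/2) (min (1/2) ((β - u)/(2*β))) with hδdef
  have hδpos : 0 < δ :=
    lt_min (half_pos hε) (lt_min one_half_pos (div_pos (sub_pos.2 huβ) (by linarith)))
  have hδhalf : δ ≤ 1/2 := le_trans (min_le_right _ _) (min_le_left _ _)
  have hδε : δ ≤ ε/2 := min_le_left _ _
  have hδu : δ ≤ (β - u)/(2*β) := le_trans (min_le_right _ _) (min_le_right _ _)
  have hβne : β ≠ 0 := ne_of_gt hβpos
  have hg'norm0 : ‖(((β⁻¹ : ℝ) : 𝕜) • g : Y →L[𝕜] 𝕜)‖ = 1 := by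
    have hns : ‖(((β⁻¹ : ℝ) : 𝕜) • g : Y →L[𝕜] 𝕜)‖ = ‖((β⁻¹ : ℝ) : 𝕜)‖ * ‖g‖ :=
      clm_norm_const_smul _ _
    rw [hns, RCLike.norm_ofReal, abs_of_pos (inv_pos.2 hβpos), ← hβ,
      inv_mul_cancel₀ hβne]
  set g' : Y →L[𝕜] 𝕜 := ((β⁻¹ : ℝ) : 𝕜) • g with hg'
  have hg'norm : ‖g'‖ = 1 := hg'norm0
  set T := g'.smulRight x with hTdef
  have hTnorm : ‖T‖ = 1 := by
    rw [hTdef, ContinuousLinearMap.norm_smulRight_apply, hg'norm, hx, one_mul]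
  obtain ⟨⟨θ₀, hθ₀, hθ₀r⟩, -⟩ := h T ⟨g', x, fun _ => rfl⟩
  have hop : (2 : ℝ) - δ < ‖ContinuousLinearMap.id 𝕜 Y + θ₀ • T‖ := by
    rw [← hθ₀r, hTnorm]; linarith
  obtain ⟨z, hz1, hz2⟩ := (ContinuousLinearMap.id 𝕜 Y + θ₀ • T).exists_lt_apply_of_lt_opNorm hop
  have happ : (ContinuousLinearMap.id 𝕜 Y + θ₀ • T) z = z + (θ₀ * g' z) • x := by
    simp [hTdef, ContinuousLinearMap.smulRight_apply, smul_smul]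
  rw [happ] at hz2
  have hgc : ‖θ₀ * g' z‖ = ‖g' z‖ := by rw [norm_mul, hθ₀, one_mul]
  have hcle : ‖θ₀ * g' z‖ ≤ 1 := by
    rw [hgc]
    calc ‖g' z‖ ≤ ‖g'‖ * ‖z‖ := g'.le_opNorm z
    _ ≤ 1 := by rw [hg'norm, one_mul]; exact hz1.le
  have hcgt : 1 - δ < ‖θ₀ * g' z‖ := by
    have hd : ‖z + (θ₀ * g' z) • x‖ ≤ ‖z‖ + ‖θ₀ * g' z‖ := by
      calc ‖z + (θ₀ * g' z) • x‖ ≤ ‖z‖ + ‖(θ₀ * g' z) • x‖ := norm_add_le _ _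
      _ = ‖z‖ + ‖θ₀ * g' z‖ := by rw [norm_smul, hx, mul_one]
    linarith
  have hwpos : (0:ℝ) < ‖g' z‖ := by rw [← hgc]; linarith
  have hwne : g' z ≠ 0 := norm_pos_iff.mp hwpos
  set ρ : 𝕜 := (‖g' z‖ : 𝕜) / g' z with hρ
  have hρnorm : ‖ρ‖ = 1 := by
    rw [hρ, norm_div, RCLike.norm_ofReal, abs_norm, div_self (norm_ne_zero_iff.mpr hwne)]
  have hρw : ρ * g' z = (‖g' z‖ : 𝕜) := div_mul_cancel₀ _ hwne
  set y₁ := ρ • z with hy₁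
  have hy₁le : ‖y₁‖ ≤ 1 := by rw [hy₁, norm_smul, hρnorm, one_mul]; exact hz1.le
  -- re (g y₁) is big
  have hgz : g z = (β : 𝕜) * g' z := by
    rw [hg']
    simp only [ContinuousLinearMap.smul_apply, smul_eq_mul, ← mul_assoc, ← RCLike.ofReal_mul]
    rw [mul_inv_cancel₀ hβne]
    simp
  have hrey₁ : re (g y₁) = β * ‖g' z‖ := by
    have hv : g y₁ = (β : 𝕜) * (‖g' z‖ : 𝕜) := by
      calc g y₁ = ρ * g z := by rw [hy₁, map_smul, smul_eq_mul]
      _ = (β : 𝕜) * (ρ * g' z) := by rw [hgz]; ring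
      _ = (β : 𝕜) * (‖g' z‖ : 𝕜) := by rw [hρw]
    rw [hv, ← RCLike.ofReal_mul, RCLike.ofReal_re]
  have hrebig : u < re (g y₁) := by
    rw [hrey₁]
    have h1 : β * (1 - δ) ≤ β * ‖g' z‖ := by
      apply mul_le_mul_of_nonneg_left _ hβpos.le
      rw [← hgc]; linarith
    have e1 : β * ((β - u) / (2 * β)) = (β - u) / 2 := by
      field_simp
    have h2 : β * δ ≤ (β - u)/2 := by
      have := mul_le_mul_of_nonneg_left hδu hβpos.le
      rw [e1] at this
      linarith
    have h3 : β * (1 - δ) = β - β * δ := by ring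
    linarith
  -- y₁ ∈ ADPAset
  have hnorm1 : ‖y₁ + (ρ * (θ₀ * g' z)) • x‖ = ‖z + (θ₀ * g' z) • x‖ := by
    have hve : y₁ + (ρ * (θ₀ * g' z)) • x = ρ • (z + (θ₀ * g' z) • x) := by
      rw [hy₁, smul_add, smul_smul]
    rw [hve, norm_smul, hρnorm, one_mul]
  set d := ρ * (θ₀ * g' z) with hd
  have hdnorm : ‖d‖ = ‖θ₀ * g' z‖ := by rw [hd, norm_mul, hρnorm, one_mul]
  have hdpos : (0:ℝ) < ‖d‖ := by rw [hdnorm]; linarith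
  have hdne : d ≠ 0 := norm_pos_iff.mp hdpos
  set τ : 𝕜 := d / (‖d‖ : 𝕜) with hτ
  have hτnorm : ‖τ‖ = 1 := by
    rw [hτ, norm_div, RCLike.norm_ofReal, abs_norm, div_self (norm_ne_zero_iff.mpr hdne)]
  have hτne : τ ≠ 0 := norm_pos_iff.mp (by rw [hτnorm]; norm_num)
  have hτd : τ * (‖d‖ : 𝕜) = d := div_mul_cancel₀ _ (by
    exact_mod_cast (norm_ne_zero_iff.mpr hdne))
  have hdτ : d - τ = τ * (((‖d‖ - 1 : ℝ)) : 𝕜) := by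
    rw [RCLike.ofReal_sub, RCLike.ofReal_one, mul_sub, mul_one, hτd]
  have hsub : ‖d - τ‖ = 1 - ‖d‖ := by
    rw [hdτ, norm_mul, hτnorm, one_mul, RCLike.norm_ofReal, abs_sub_comm,
      abs_of_nonneg (by rw [hdnorm]; linarith)]
  have hτx : 2 - ε < ‖y₁ + τ • x‖ := by
    have h1 : ‖y₁ + d • x‖ - ‖(d - τ) • x‖ ≤ ‖y₁ + τ • x‖ := by
      have hve : y₁ + τ • x = (y₁ + d • x) - (d - τ) • x := by
        rw [sub_smul]; abel
      rw [hve]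
      exact norm_sub_norm_le _ _
    have h2 : ‖(d - τ) • x‖ = 1 - ‖d‖ := by rw [norm_smul, hx, mul_one, hsub]
    rw [h2] at h1
    rw [hnorm1] at h1
    rw [hdnorm] at h1
    linarith
  clear_value β δ g' T ρ y₁ d τ
  have hy₁A : y₁ ∈ ADPAset 𝕜 x ε := by
    refine ⟨hy₁le, τ⁻¹, by rw [norm_inv, hτnorm, inv_one], ?_⟩
    have hve : x + τ⁻¹ • y₁ = τ⁻¹ • (y₁ + τ • x) := by
      rw [smul_add, smul_smul, inv_mul_cancel₀ hτne, one_smul, add_comm]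
    rw [hve, norm_smul, norm_inv, hτnorm, inv_one, one_mul]
    exact hτx
  have := hCu y₁ (subset_closure (subset_convexHull ℝ _ hy₁A))
  linarith

lemma aux_norm_smul_lower {v w : Y} (hv : ‖v‖ = 1) (hw : ‖w‖ ≤ 1) {η s : ℝ}
    (hs : 0 ≤ s) (hvw : 2 - η < ‖v + w‖) : 1 + s - η * max 1 s ≤ ‖w + s • v‖ := by
  rcases le_total s 1 with h1 | h1
  · have hmax : max 1 s = 1 := max_eq_left h1
    have hve : w + s • v = (w + v) - (1 - s) • v := by
      rw [sub_smul, one_smul]; abel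
    have hb : ‖w + v‖ - ‖(1 - s) • v‖ ≤ ‖w + s • v‖ := by
      rw [hve]; exact norm_sub_norm_le _ _
    have hn : ‖(1 - s) • v‖ = 1 - s := by
      rw [norm_smul, hv, mul_one, Real.norm_eq_abs, abs_of_nonneg (by linarith)]
    have hcomm : ‖w + v‖ = ‖v + w‖ := by rw [add_comm]
    rw [hn, hcomm] at hb
    rw [hmax]
    linarith
  · have hmax : max 1 s = s := max_eq_right h1
    have hve : w + s • v = s • (v + w) - (s - 1) • w := by
      rw [sub_smul, one_smul, smul_add]; abel
    have hb : ‖s • (v + w)‖ - ‖(s - 1) • w‖ ≤ ‖w + s • v‖ := by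
      rw [hve]; exact norm_sub_norm_le _ _
    have hn1 : ‖s • (v + w)‖ = s * ‖v + w‖ := by
      rw [norm_smul, Real.norm_eq_abs, abs_of_nonneg hs]
    have hn2 : ‖(s - 1) • w‖ ≤ s - 1 := by
      rw [norm_smul, Real.norm_eq_abs, abs_of_nonneg (by linarith)]
      exact mul_le_of_le_one_right (by linarith) hw
    have hs2 : s * (2 - η) ≤ s * ‖v + w‖ :=
      mul_le_mul_of_nonneg_left hvw.le hs
    rw [hmax]
    nlinarith

lemma geom_adp [Nontrivial Y]
    (h : ∀ x : Y, ‖x‖ = 1 → ∀ ε : ℝ, 0 < ε → ∀ y : Y, ‖y‖ ≤ 1 →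
      y ∈ closure (convexHull ℝ (ADPAset 𝕜 x ε))) :
    AltDaugavetProperty 𝕜 Y := by
  intro T hT
  have hub : ∀ r ∈ {r : ℝ | ∃ θ : 𝕜, ‖θ‖ = 1 ∧ r = ‖ContinuousLinearMap.id 𝕜 Y + θ • T‖},
      r ≤ 1 + ‖T‖ := by
    rintro r ⟨θ, hθ, rfl⟩
    calc ‖ContinuousLinearMap.id 𝕜 Y + θ • T‖
        ≤ ‖ContinuousLinearMap.id 𝕜 Y‖ + ‖θ • T‖ := norm_add_le _ _
      _ ≤ 1 + ‖T‖ := by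
          rw [ContinuousLinearMap.norm_id]
          have hsm : ‖θ • T‖ = ‖θ‖ * ‖T‖ := norm_smul θ T
          rw [hsm, hθ, one_mul]
  have hcont : Continuous fun θ : 𝕜 => ‖ContinuousLinearMap.id 𝕜 Y + θ • T‖ := by
    have h1 : Continuous fun θ : 𝕜 => θ • T := continuous_id.smul continuous_const
    exact (continuous_const.add h1).norm
  obtain ⟨θs, hθsmem, hmax⟩ := (isCompact_sphere (0:𝕜) 1).exists_isMaxOn
    (NormedSpace.sphere_nonempty.mpr zero_le_one) hcont.continuousOn
  rw [mem_sphere_zero_iff_norm] at hθsmem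
  refine ⟨⟨θs, hθsmem, ?_⟩, hub⟩
  refine le_antisymm ?_ (hub _ ⟨θs, hθsmem, rfl⟩)
  refine le_of_forall_pos_le_add ?_
  intro δ hδ
  by_cases hT0 : T = 0
  · rw [hT0]
    simp only [norm_zero, smul_zero, add_zero, ContinuousLinearMap.norm_id]
    linarith
  obtain ⟨g, u, hgu⟩ := hT
  have hrep : T = g.smulRight u := by
    ext v; rw [hgu]; rfl
  have hgne : g ≠ 0 := by
    intro h0; apply hT0; ext v; rw [hgu, h0]; simp
  have hune : u ≠ 0 := by
    intro h0; apply hT0; ext v; rw [hgu, h0]; simp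
  have hgpos : (0:ℝ) < ‖g‖ := norm_pos_iff.mpr hgne
  have hupos : (0:ℝ) < ‖u‖ := norm_pos_iff.mpr hune
  obtain ⟨ν, hν⟩ : ∃ ν : ℝ, ν = ‖g‖ * ‖u‖ := ⟨_, rfl⟩
  have hTnorm : ‖T‖ = ν := by
    rw [hrep, ContinuousLinearMap.norm_smulRight_apply, hν]
  have hνpos : 0 < ν := hν ▸ mul_pos hgpos hupos
  obtain ⟨η, hηpos, hηq, hηδ⟩ : ∃ η : ℝ, 0 < η ∧ η ≤ 1/4 ∧ η * (1 + 3*ν) ≤ δ := by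
    refine ⟨min (1/4) (δ/(1+3*ν)), lt_min (by norm_num) (div_pos hδ (by linarith)),
      min_le_left _ _, ?_⟩
    have h1 : min (1/4 : ℝ) (δ/(1+3*ν)) ≤ δ/(1+3*ν) := min_le_right _ _
    calc min (1/4 : ℝ) (δ/(1+3*ν)) * (1+3*ν) ≤ (δ/(1+3*ν)) * (1+3*ν) :=
      mul_le_mul_of_nonneg_right h1 (by linarith)
    _ = δ := by field_simp
  obtain ⟨z, hz1, hz2⟩ := g.exists_lt_apply_of_lt_opNorm
    (show ‖g‖*(1-η) < ‖g‖ by nlinarith)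
  obtain ⟨uu, huu⟩ : ∃ uu : Y, uu = ((‖u‖⁻¹ : ℝ) : 𝕜) • u := ⟨_, rfl⟩
  have huunorm : ‖uu‖ = 1 := by
    rw [huu, norm_smul, RCLike.norm_ofReal, abs_of_pos (inv_pos.2 hupos),
      inv_mul_cancel₀ (ne_of_gt hupos)]
  have hu_eq : ((‖u‖ : ℝ) : 𝕜) • uu = u := by
    rw [huu, smul_smul, ← RCLike.ofReal_mul, mul_inv_cancel₀ (ne_of_gt hupos)]
    simp
  obtain ⟨t, ht⟩ : ∃ t : ℝ, t = ‖g‖*(1-2*η) := ⟨_, rfl⟩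
  have htpos : 0 < t := by rw [ht]; nlinarith
  have hexa : ∃ a ∈ ADPAset 𝕜 uu η, t < ‖g a‖ := by
    by_contra hcon
    push_neg at hcon
    have hK : convexHull ℝ (ADPAset 𝕜 uu η) ⊆ {v : Y | ‖g v‖ ≤ t} := by
      apply convexHull_min hcon
      intro v hv w hw av bw hav hbw habv
      show ‖g (av • v + bw • w)‖ ≤ t
      have hv' : ‖g v‖ ≤ t := hv
      have hw' : ‖g w‖ ≤ t := hw
      calc ‖g (av • v + bw • w)‖ = ‖av • g v + bw • g w‖ := by
            rw [map_add, ContinuousLinearMap.map_smul_of_tower,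
              ContinuousLinearMap.map_smul_of_tower]
      _ ≤ ‖av • g v‖ + ‖bw • g w‖ := norm_add_le _ _
      _ = av * ‖g v‖ + bw * ‖g w‖ := by
            rw [norm_smul, norm_smul, Real.norm_eq_abs, Real.norm_eq_abs,
              abs_of_nonneg hav, abs_of_nonneg hbw]
      _ ≤ av * t + bw * t := by
            apply add_le_add
            · exact mul_le_mul_of_nonneg_left hv' hav
            · exact mul_le_mul_of_nonneg_left hw' hbw
      _ = t := by rw [← add_mul, habv, one_mul]
    have hKc : closure (convexHull ℝ (ADPAset 𝕜 uu η)) ⊆ {v : Y | ‖g v‖ ≤ t} := by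
      apply closure_minimal hK
      exact isClosed_le (continuous_norm.comp g.continuous) continuous_const
    have hzA := h uu huunorm η hηpos z hz1.le
    have hfin := hKc hzA
    have hfin' : ‖g z‖ ≤ t := hfin
    rw [ht] at hfin'
    nlinarith
  obtain ⟨a, ⟨ha1, θ, hθ, hθa⟩, hga⟩ := hexa
  have hgapos : 0 < ‖g a‖ := lt_trans htpos hga
  have hgane : g a ≠ 0 := norm_pos_iff.mp hgapos
  have hθne : θ ≠ 0 := by
    intro h0; rw [h0, norm_zero] at hθ; norm_num at hθ
  obtain ⟨s, hs⟩ : ∃ s : ℝ, s = ‖g a‖ * ‖u‖ := ⟨_, rfl⟩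
  have hspos : 0 < s := hs ▸ mul_pos hgapos hupos
  have hsν : s ≤ ν := by
    rw [hs, hν]
    have h1 : ‖g a‖ ≤ ‖g‖ := by
      calc ‖g a‖ ≤ ‖g‖ * ‖a‖ := g.le_opNorm a
      _ ≤ ‖g‖ := mul_le_of_le_one_right hgpos.le ha1
    exact mul_le_mul_of_nonneg_right h1 hupos.le
  have hst : ν * (1 - 2*η) < s := by
    rw [hs, hν]
    calc ‖g‖ * ‖u‖ * (1-2*η) = (‖g‖*(1-2*η)) * ‖u‖ := by ring
    _ < ‖g a‖ * ‖u‖ := mul_lt_mul_of_pos_right (ht ▸ hga) hupos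
  obtain ⟨θ', hθ'⟩ : ∃ θ' : 𝕜, θ' = θ⁻¹ * ((‖g a‖ : ℝ) : 𝕜) / (g a) := ⟨_, rfl⟩
  have hθ'norm : ‖θ'‖ = 1 := by
    rw [hθ', norm_div, norm_mul, norm_inv, hθ, inv_one, one_mul,
      RCLike.norm_ofReal, abs_norm, div_self (norm_ne_zero_iff.mpr hgane)]
  have hcoef : θ' * g a = θ⁻¹ * ((‖g a‖ : ℝ) : 𝕜) := by
    rw [hθ', div_mul_cancel₀ _ hgane]
  have happ : (ContinuousLinearMap.id 𝕜 Y + θ' • T) a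
      = a + (θ⁻¹ * ((s : ℝ) : 𝕜)) • uu := by
    have h1 : (ContinuousLinearMap.id 𝕜 Y + θ' • T) a = a + (θ' * g a) • u := by
      simp [hrep, ContinuousLinearMap.smulRight_apply, smul_smul]
    rw [h1, hcoef, ← hu_eq, smul_smul, hs]
    congr 2
    rw [RCLike.ofReal_mul]
    ring
  have hkey : 1 + s - η * max 1 s ≤ ‖(ContinuousLinearMap.id 𝕜 Y + θ' • T) a‖ := by
    rw [happ]
    have hrot : ‖a + (θ⁻¹ * ((s : ℝ) : 𝕜)) • uu‖ = ‖θ • a + ((s : ℝ) : 𝕜) • uu‖ := by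
      have hve : θ • (a + (θ⁻¹ * ((s : ℝ) : 𝕜)) • uu) = θ • a + ((s : ℝ) : 𝕜) • uu := by
        rw [smul_add, smul_smul, ← mul_assoc, mul_inv_cancel₀ hθne, one_mul]
      rw [← hve, norm_smul, hθ, one_mul]
    rw [hrot]
    have hsm : ((s : ℝ) : 𝕜) • uu = s • uu := (RCLike.real_smul_eq_coe_smul (K := 𝕜) s uu).symm
    rw [hsm]
    have hθanorm : ‖θ • a‖ ≤ 1 := by
      rw [norm_smul, hθ, one_mul]; exact ha1
    exact aux_norm_smul_lower huunorm hθanorm hspos.le hθa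
  have hfin : 1 + ν - δ ≤ ‖ContinuousLinearMap.id 𝕜 Y + θ' • T‖ := by
    have h2 : ‖(ContinuousLinearMap.id 𝕜 Y + θ' • T) a‖
        ≤ ‖ContinuousLinearMap.id 𝕜 Y + θ' • T‖ :=
      (ContinuousLinearMap.id 𝕜 Y + θ' • T).unit_le_opNorm a ha1
    have h3 : max 1 s ≤ 1 + ν := max_le (by linarith) (by linarith)
    have h4 : η * max 1 s ≤ η * (1+ν) := mul_le_mul_of_nonneg_left h3 hηpos.le
    nlinarith
  have hmem : θ' ∈ sphere (0:𝕜) 1 := by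
    rw [mem_sphere_zero_iff_norm]; exact hθ'norm
  have hms := hmax hmem
  have hms' : ‖ContinuousLinearMap.id 𝕜 Y + θ' • T‖
      ≤ ‖ContinuousLinearMap.id 𝕜 Y + θs • T‖ := hms
  rw [hTnorm]
  linarith

end Geom
end ADPAux


set_option maxHeartbeats 1000000 in
/-- Separable determination of the alternative Daugavet property with respect to a
Lipschitz map. -/
theorem separable_determination_alt_daugavet {𝕜 X : Type*} [RCLike 𝕜] [NormedAddCommGroup X] [NormedSpace 𝕜 X]
    [NormedSpace ℝ X] [IsScalarTower ℝ 𝕜 X] [CompleteSpace X]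
    (hX : AltDaugavetProperty 𝕜 X) (T : X → X) (hT : ∃ C, LipschitzWith C T) :
    ∃ E : Submodule 𝕜 X, IsClosed (E : Set X) ∧
      TopologicalSpace.IsSeparable (E : Set X) ∧ AltDaugavetProperty 𝕜 ↥E ∧
      (∀ x ∈ E, T x ∈ E) ∧ lipSemi (fun e : ↥E => T (e : X)) = lipSemi T := by
  classical
  haveI hntX : Nontrivial X := adp_nontrivial hX
  obtain ⟨C, hC⟩ := hT
  have hcontT : Continuous T := hC.continuous
  have hub : ∀ r ∈ {r : ℝ | ∃ x₁ x₂ : X, x₁ ≠ x₂ ∧ r = ‖T x₁ - T x₂‖ / ‖x₁ - x₂‖},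
      r ≤ (C : ℝ) := by
    rintro r ⟨p, q, hpq, rfl⟩
    have hpos : (0:ℝ) < ‖p - q‖ := by
      rw [norm_pos_iff, sub_ne_zero]; exact hpq
    rw [div_le_iff₀ hpos]
    have hlip := hC.dist_le_mul p q
    rwa [dist_eq_norm, dist_eq_norm] at hlip
  have hBdd : BddAbove {r : ℝ | ∃ x₁ x₂ : X, x₁ ≠ x₂ ∧ r = ‖T x₁ - T x₂‖ / ‖x₁ - x₂‖} :=
    ⟨_, hub⟩
  obtain ⟨p₀, q₀, hp₀q₀⟩ := exists_pair_ne X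
  have hsetne : {r : ℝ | ∃ x₁ x₂ : X, x₁ ≠ x₂ ∧ r = ‖T x₁ - T x₂‖ / ‖x₁ - x₂‖}.Nonempty :=
    ⟨_, p₀, q₀, hp₀q₀, rfl⟩
  have hlipdef : lipSemi T
      = sSup {r : ℝ | ∃ x₁ x₂ : X, x₁ ≠ x₂ ∧ r = ‖T x₁ - T x₂‖ / ‖x₁ - x₂‖} := rfl
  have hpair : ∀ n : ℕ, ∃ p q : X, p ≠ q ∧
      lipSemi T - 1/(n+1) < ‖T p - T q‖ / ‖p - q‖ := by
    intro n
    have hlt : lipSemi T - 1/(n+1)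
        < sSup {r : ℝ | ∃ x₁ x₂ : X, x₁ ≠ x₂ ∧ r = ‖T x₁ - T x₂‖ / ‖x₁ - x₂‖} := by
      rw [← hlipdef]
      have hpos : (0:ℝ) < 1/(n+1) := by positivity
      linarith
    obtain ⟨r, hrmem, hrlt⟩ := exists_lt_of_lt_csSup hsetne hlt
    obtain ⟨p, q, hpq, rfl⟩ := hrmem
    exact ⟨p, q, hpq, hrlt⟩
  choose pa pb hpab hplt using hpair
  obtain ⟨x₀, hx₀⟩ : ∃ x : X, ‖x‖ = 1 := by
    obtain ⟨x, hx⟩ := NormedSpace.sphere_nonempty (E := X) (x := 0) (r := 1) |>.mpr zero_le_one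
    rw [mem_sphere_zero_iff_norm] at hx
    exact ⟨x, hx⟩
  -- witness sets for the geometric property of X
  have key : ∀ (x y : X) (q : ℚ) (m : ℕ), ‖x‖ = 1 → ‖y‖ ≤ 1 → 0 < (q:ℝ) →
      ∃ s : Set X, s.Finite ∧ s ⊆ ADPAset 𝕜 x (q:ℝ) ∧
        ∃ p ∈ convexHull ℝ s, dist y p < 1/(m+1) := by
    intro x y q m hx hy hq
    have hyc := adp_geom hX hx hq hy
    rw [Metric.mem_closure_iff] at hyc
    obtain ⟨p, hp, hdist⟩ := hyc (1/(m+1)) (by positivity)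
    rw [convexHull_eq_union_convexHull_finite_subsets] at hp
    simp only [Set.mem_iUnion] at hp
    obtain ⟨tf, htf, hptf⟩ := hp
    exact ⟨↑tf, tf.finite_toSet, htf, p, hptf, hdist⟩
  obtain ⟨W, hWfin, hWsub, hWpt⟩ : ∃ W : X → X → ℚ → ℕ → Set X,
      (∀ (x y : X) (q : ℚ) (m : ℕ), (W x y q m).Finite) ∧
      (∀ (x y : X) (q : ℚ) (m : ℕ), ‖x‖ = 1 → ‖y‖ ≤ 1 → 0 < (q:ℝ) →
        W x y q m ⊆ ADPAset 𝕜 x (q:ℝ)) ∧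
      (∀ (x y : X) (q : ℚ) (m : ℕ), ‖x‖ = 1 → ‖y‖ ≤ 1 → 0 < (q:ℝ) →
        ∃ p ∈ convexHull ℝ (W x y q m), dist y p < 1/(m+1)) := by
    refine ⟨fun x y q m =>
      if h : ‖x‖ = 1 ∧ ‖y‖ ≤ 1 ∧ 0 < (q:ℝ) then (key x y q m h.1 h.2.1 h.2.2).choose
      else ∅, ?_, ?_, ?_⟩
    · intro x y q m
      dsimp only
      split_ifs with hcond
      · exact (key x y q m hcond.1 hcond.2.1 hcond.2.2).choose_spec.1
      · exact Set.finite_empty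
    · intro x y q m hx hy hq
      dsimp only
      rw [dif_pos ⟨hx, hy, hq⟩]
      exact (key x y q m hx hy hq).choose_spec.2.1
    · intro x y q m hx hy hq
      dsimp only
      rw [dif_pos ⟨hx, hy, hq⟩]
      exact (key x y q m hx hy hq).choose_spec.2.2
  -- dense subsets of spans
  have spanSep : ∀ s : Set X, s.Countable → ∃ c : Set X, c.Countable ∧
      (Submodule.span 𝕜 s : Set X) ⊆ closure c := fun s hs => hs.isSeparable.span
  obtain ⟨df, hdfc, hdfsub⟩ : ∃ df : Set X → Set X,
      (∀ s : Set X, s.Countable → (df s).Countable) ∧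
      (∀ s : Set X, s.Countable → (Submodule.span 𝕜 s : Set X) ⊆ closure (df s)) := by
    refine ⟨fun s => if h : s.Countable then (spanSep s h).choose else ∅, ?_, ?_⟩
    · intro s hs; dsimp only; rw [dif_pos hs]; exact (spanSep s hs).choose_spec.1
    · intro s hs; dsimp only; rw [dif_pos hs]; exact (spanSep s hs).choose_spec.2
  -- the saturation step
  set step : Set X → Set X := fun s =>
    s ∪ T '' s ∪ df s ∪ (fun v : X => ‖v‖⁻¹ • v) '' s ∪
      ⋃ x ∈ s, ⋃ y ∈ s, ⋃ q : ℚ, ⋃ m : ℕ, W x y q m with hstepdef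
  have hsub_step : ∀ s : Set X, s ⊆ step s := fun s v hv =>
    Set.mem_union_left _ (Set.mem_union_left _ (Set.mem_union_left _
      (Set.mem_union_left _ hv)))
  have hT_step : ∀ s : Set X, T '' s ⊆ step s := fun s v hv =>
    Set.mem_union_left _ (Set.mem_union_left _ (Set.mem_union_left _
      (Set.mem_union_right _ hv)))
  have hdf_step : ∀ s : Set X, df s ⊆ step s := fun s v hv =>
    Set.mem_union_left _ (Set.mem_union_left _ (Set.mem_union_right _ hv))
  have hnorm_step : ∀ s : Set X, (fun v : X => ‖v‖⁻¹ • v) '' s ⊆ step s := fun s v hv =>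
    Set.mem_union_left _ (Set.mem_union_right _ hv)
  have hW_step : ∀ (s : Set X) (x y : X) (q : ℚ) (m : ℕ), x ∈ s → y ∈ s →
      W x y q m ⊆ step s := by
    intro s x y q m hx hy v hv
    apply Set.mem_union_right
    refine Set.mem_biUnion hx ?_
    refine Set.mem_biUnion hy ?_
    exact Set.mem_iUnion.2 ⟨q, Set.mem_iUnion.2 ⟨m, hv⟩⟩
  have hstep_count : ∀ s : Set X, s.Countable → (step s).Countable := by
    intro s hs
    refine ((((hs.union (hs.image T)).union (hdfc s hs)).union (hs.image _)).union ?_)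
    refine hs.biUnion fun x _ => hs.biUnion fun y _ => ?_
    exact countable_iUnion fun q => countable_iUnion fun m => (hWfin x y q m).countable
  -- the chain
  set D : ℕ → Set X := fun n => step^[n] ({x₀} ∪ Set.range pa ∪ Set.range pb) with hD
  have hD0 : D 0 = {x₀} ∪ Set.range pa ∪ Set.range pb := rfl
  have hDsucc : ∀ n, D (n+1) = step (D n) := fun n => Function.iterate_succ_apply' step n _
  have hDc : ∀ n, (D n).Countable := by
    intro n; induction n with
    | zero =>
      rw [hD0]
      exact ((countable_singleton x₀).union (countable_range pa)).union (countable_range pb)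
    | succ n ih => rw [hDsucc]; exact hstep_count _ ih
  have hDmono : Monotone D := monotone_nat_of_le_succ fun n => by
    rw [hDsucc]; exact hsub_step _
  set Ω : Set X := ⋃ n, D n with hΩ
  have hΩc : Ω.Countable := countable_iUnion hDc
  have hDΩ : ∀ n, D n ⊆ Ω := fun n => subset_iUnion D n
  set E : Submodule 𝕜 X := (Submodule.span 𝕜 Ω).topologicalClosure with hE
  have hspanclos : (Submodule.span 𝕜 Ω : Set X) ⊆ closure Ω := by
    intro v hv
    have hmem : v ∈ ⨆ n, Submodule.span 𝕜 (D n) := by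
      rw [← Submodule.span_iUnion]; exact hv
    have hmono2 : Monotone fun n => Submodule.span 𝕜 (D n) :=
      fun m n h => Submodule.span_mono (hDmono h)
    rw [Submodule.mem_iSup_of_directed _ hmono2.directed_le] at hmem
    obtain ⟨n, hn⟩ := hmem
    have h1 : (Submodule.span 𝕜 (D n) : Set X) ⊆ closure (df (D n)) := hdfsub _ (hDc n)
    have h2 : df (D n) ⊆ Ω := by
      refine (hdf_step (D n)).trans ?_
      rw [← hDsucc]
      exact hDΩ (n+1)
    exact closure_mono h2 (h1 hn)
  have hEset : (E : Set X) = closure Ω := by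
    apply Set.Subset.antisymm
    · rw [hE, Submodule.topologicalClosure_coe]
      calc closure (Submodule.span 𝕜 Ω : Set X) ⊆ closure (closure Ω) :=
        closure_mono hspanclos
      _ = closure Ω := closure_closure
    · rw [hE, Submodule.topologicalClosure_coe]
      exact closure_mono Submodule.subset_span
  have hΩE : Ω ⊆ (E : Set X) := by rw [hEset]; exact subset_closure
  have hx₀D : x₀ ∈ D 0 := by
    rw [hD0]
    exact Set.mem_union_left _ (Set.mem_union_left _ rfl)
  have hx₀E : x₀ ∈ E := hΩE (hDΩ 0 hx₀D)
  have hpaE : ∀ n, pa n ∈ E := fun n =>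
    hΩE (hDΩ 0 (by rw [hD0]; exact Set.mem_union_left _ (Set.mem_union_right _ ⟨n, rfl⟩)))
  have hpbE : ∀ n, pb n ∈ E := fun n =>
    hΩE (hDΩ 0 (Set.mem_union_right _ ⟨n, rfl⟩))
  -- T invariance
  have hTinv : ∀ x ∈ E, T x ∈ E := by
    intro x hx
    have hx' : x ∈ closure Ω := by rw [← hEset]; exact hx
    have h1 : T x ∈ closure (T '' Ω) :=
      image_closure_subset_closure_image hcontT ⟨x, hx', rfl⟩
    have h2 : T '' Ω ⊆ Ω := by
      rintro v ⟨w, hw, rfl⟩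
      obtain ⟨n, hn⟩ := Set.mem_iUnion.mp hw
      refine hDΩ (n+1) ?_
      rw [hDsucc]
      exact hT_step _ ⟨w, hn, rfl⟩
    have h3 : T x ∈ closure Ω := closure_mono h2 h1
    rw [← hEset] at h3
    exact h3
  -- the ambient geometric property of E
  have hamb : ∀ x : X, x ∈ (E : Set X) → ‖x‖ = 1 → ∀ ε : ℝ, 0 < ε →
      ∀ y : X, y ∈ (E : Set X) → ‖y‖ ≤ 1 →
      y ∈ closure (convexHull ℝ (ADPAset 𝕜 x ε ∩ (E : Set X))) := by
    intro x hxE hxn ε hε y hyE hyn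
    rw [Metric.mem_closure_iff]
    intro δ hδ
    obtain ⟨q, hq0, hqε⟩ := exists_rat_btwn (show (0:ℝ) < ε/2 by linarith)
    obtain ⟨r, hr0, hrδ, hrq, hr2⟩ : ∃ r : ℝ, 0 < r ∧ r ≤ δ/4 ∧ r ≤ (q:ℝ)/4 ∧ r ≤ 1/2 := by
      refine ⟨min (δ/4) (min ((q:ℝ)/4) (1/2)), ?_, min_le_left _ _, ?_, ?_⟩
      · have : (0:ℝ) < (q:ℝ)/4 := by linarith
        positivity
      · exact (min_le_right _ _).trans (min_le_left _ _)
      · exact (min_le_right _ _).trans (min_le_right _ _)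
    -- approximate x
    have hxcl : x ∈ closure Ω := by rw [← hEset]; exact hxE
    rw [Metric.mem_closure_iff] at hxcl
    obtain ⟨x', hx'Ω, hx'd⟩ := hxcl r hr0
    rw [dist_eq_norm] at hx'd
    have hxx' : |‖x'‖ - 1| ≤ r := by
      have h1 := abs_norm_sub_norm_le x' x
      rw [hxn, norm_sub_rev] at h1
      linarith [h1, hx'd]
    have hx'pos : 0 < ‖x'‖ := by
      have := abs_le.mp hxx'
      linarith [this.1]
    obtain ⟨n₁, hx'D⟩ := Set.mem_iUnion.mp hx'Ω
    have hxhatΩ : ‖x'‖⁻¹ • x' ∈ Ω := by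
      refine hDΩ (n₁+1) ?_
      rw [hDsucc]
      exact hnorm_step _ ⟨x', hx'D, rfl⟩
    have hxhatnorm : ‖(‖x'‖⁻¹ • x' : X)‖ = 1 := by
      rw [norm_smul, Real.norm_eq_abs, abs_of_pos (inv_pos.2 hx'pos),
        inv_mul_cancel₀ (ne_of_gt hx'pos)]
    have hxhatclose : ‖x - ‖x'‖⁻¹ • x'‖ ≤ 2*r := by
      have h2 : ‖x' - ‖x'‖⁻¹ • x'‖ = |‖x'‖ - 1| := by
        have hv : x' - ‖x'‖⁻¹ • x' = (1 - ‖x'‖⁻¹) • x' := by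
          rw [sub_smul, one_smul]
        rw [hv, norm_smul, Real.norm_eq_abs]
        have habs : |1 - ‖x'‖⁻¹| * ‖x'‖ = |(1 - ‖x'‖⁻¹) * ‖x'‖| := by
          rw [abs_mul, abs_of_pos hx'pos]
        rw [habs]
        congr 1
        field_simp
      have h3 : ‖x - ‖x'‖⁻¹ • x'‖ ≤ ‖x - x'‖ + ‖x' - ‖x'‖⁻¹ • x'‖ := by
        have := norm_add_le (x - x') (x' - ‖x'‖⁻¹ • x')
        simpa using this
      rw [h2] at h3
      linarith
    -- approximate y
    have hycl : y ∈ closure Ω := by rw [← hEset]; exact hyE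
    rw [Metric.mem_closure_iff] at hycl
    obtain ⟨y', hy'Ω, hy'd⟩ := hycl r hr0
    rw [dist_eq_norm] at hy'd
    obtain ⟨yh, hyhΩ, hyhnorm, hyhclose⟩ : ∃ yh : X, yh ∈ Ω ∧ ‖yh‖ ≤ 1 ∧ ‖y - yh‖ ≤ 2*r := by
      by_cases hy1 : ‖y'‖ ≤ 1
      · exact ⟨y', hy'Ω, hy1, by linarith⟩
      · push_neg at hy1
        have hy'pos : 0 < ‖y'‖ := by linarith
        obtain ⟨n₂, hy'D⟩ := Set.mem_iUnion.mp hy'Ω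
        refine ⟨‖y'‖⁻¹ • y', ?_, ?_, ?_⟩
        · refine hDΩ (n₂+1) ?_
          rw [hDsucc]
          exact hnorm_step _ ⟨y', hy'D, rfl⟩
        · rw [norm_smul, Real.norm_eq_abs, abs_of_pos (inv_pos.2 hy'pos),
            inv_mul_cancel₀ (ne_of_gt hy'pos)]
        · have h2 : ‖y' - ‖y'‖⁻¹ • y'‖ = |‖y'‖ - 1| := by
            have hv : y' - ‖y'‖⁻¹ • y' = (1 - ‖y'‖⁻¹) • y' := by
              rw [sub_smul, one_smul]
            rw [hv, norm_smul, Real.norm_eq_abs]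
            have habs : |1 - ‖y'‖⁻¹| * ‖y'‖ = |(1 - ‖y'‖⁻¹) * ‖y'‖| := by
              rw [abs_mul, abs_of_pos hy'pos]
            rw [habs]
            congr 1
            field_simp
          have habs2 : |‖y'‖ - 1| ≤ r := by
            have h1 := abs_norm_sub_norm_le y' y
            rw [norm_sub_rev] at h1
            rw [abs_sub_comm] at h1  -- maybe not needed
            have h4 : ‖y'‖ - 1 ≤ r := by
              have h5 : ‖y'‖ ≤ ‖y‖ + ‖y' - y‖ := norm_le_insert' y' y
              rw [norm_sub_rev] at h5
              linarith
            rw [abs_of_pos (by linarith : (0:ℝ) < ‖y'‖ - 1)]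
            exact h4
          have h3 : ‖y - ‖y'‖⁻¹ • y'‖ ≤ ‖y - y'‖ + ‖y' - ‖y'‖⁻¹ • y'‖ := by
            have := norm_add_le (y - y') (y' - ‖y'‖⁻¹ • y')
            simpa using this
          rw [h2] at h3
          linarith
    -- the witness stage
    obtain ⟨m, hm⟩ := exists_nat_one_div_lt hr0
    obtain ⟨nx, hxhatD⟩ := Set.mem_iUnion.mp hxhatΩ
    obtain ⟨ny, hyhD⟩ := Set.mem_iUnion.mp hyhΩ
    have hxhatDN : ‖x'‖⁻¹ • x' ∈ D (max nx ny) := hDmono (le_max_left _ _) hxhatD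
    have hyhDN : yh ∈ D (max nx ny) := hDmono (le_max_right _ _) hyhD
    have hWΩ : W (‖x'‖⁻¹ • x') yh q m ⊆ Ω := by
      refine (hW_step (D (max nx ny)) _ _ q m hxhatDN hyhDN).trans ?_
      rw [← hDsucc]
      exact hDΩ _
    obtain ⟨p, hpW, hpd⟩ := hWpt (‖x'‖⁻¹ • x') yh q m hxhatnorm hyhnorm (by exact_mod_cast hq0)
    have hWA : W (‖x'‖⁻¹ • x') yh q m ⊆ ADPAset 𝕜 x ε ∩ (E : Set X) := by
      intro a ha
      obtain ⟨ha1, θ, hθ, hθa⟩ := hWsub _ _ q m hxhatnorm hyhnorm (by exact_mod_cast hq0) ha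
      refine ⟨⟨ha1, θ, hθ, ?_⟩, hΩE (hWΩ ha)⟩
      have htri : ‖(‖x'‖⁻¹ • x' : X) + θ • a‖ ≤ ‖x + θ • a‖ + ‖x - ‖x'‖⁻¹ • x'‖ := by
        have hveq : (‖x'‖⁻¹ • x' : X) + θ • a = (x + θ • a) - (x - ‖x'‖⁻¹ • x') := by abel
        rw [hveq]
        exact (norm_sub_le _ _)
      have hq2 : (q:ℝ) + 2*r < ε := by linarith
      linarith
    have hpmem : p ∈ convexHull ℝ (ADPAset 𝕜 x ε ∩ (E : Set X)) :=
      convexHull_mono hWA hpW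
    refine ⟨p, hpmem, ?_⟩
    have hd1 : dist y p ≤ dist y yh + dist yh p := dist_triangle _ _ _
    rw [dist_eq_norm] at hd1 ⊢
    have hd2 : dist yh p < r := lt_trans hpd hm
    rw [dist_eq_norm] at hd2
    calc ‖y - p‖ ≤ ‖y - yh‖ + ‖yh - p‖ := by
          have := dist_triangle y yh p
          rwa [dist_eq_norm, dist_eq_norm, dist_eq_norm] at this
    _ < 2*r + r := by linarith
    _ ≤ δ := by linarith
  -- nontriviality of E
  haveI hEnt : Nontrivial ↥E := by
    refine ⟨⟨x₀, hx₀E⟩, 0, ?_⟩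
    intro hcontra
    have hcoe : x₀ = (0 : X) := congrArg Subtype.val hcontra
    rw [hcoe, norm_zero] at hx₀
    norm_num at hx₀
  -- ADP of E
  have hADP : AltDaugavetProperty 𝕜 ↥E := by
    apply geom_adp
    intro xE hxE ε hε yE hyE
    have hemb : Topology.IsEmbedding (Subtype.val : ↥E → X) := Topology.IsEmbedding.subtypeVal
    rw [hemb.closure_eq_preimage_closure_image]
    refine Set.mem_preimage.mpr ?_
    have hAeq : (Subtype.val '' (ADPAset 𝕜 xE ε) : Set X) = ADPAset 𝕜 (xE : X) ε ∩ (E : Set X) := by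
      ext v
      constructor
      · rintro ⟨w, ⟨hw1, θ, hθ, hw2⟩, rfl⟩
        exact ⟨⟨hw1, θ, hθ, hw2⟩, w.2⟩
      · rintro ⟨⟨hv1, θ, hθ, hv2⟩, hvE⟩
        exact ⟨⟨v, hvE⟩, ⟨hv1, θ, hθ, hv2⟩, rfl⟩
    have himage : Subtype.val '' (convexHull ℝ (ADPAset 𝕜 xE ε))
        = convexHull ℝ (Subtype.val '' (ADPAset 𝕜 xE ε)) := by
      have hj := (LinearMap.restrictScalars ℝ (E.subtype)).image_convexHull (ADPAset 𝕜 xE ε)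
      simpa using hj
    rw [himage, hAeq]
    exact hamb (xE : X) xE.2 hxE ε hε (yE : X) yE.2 hyE
  -- Lipschitz seminorm equality
  have hlipeq : lipSemi (fun e : ↥E => T (e : X)) = lipSemi T := by
    have hREne : {r : ℝ | ∃ e₁ e₂ : ↥E, e₁ ≠ e₂ ∧
        r = ‖T (e₁ : X) - T (e₂ : X)‖ / ‖e₁ - e₂‖}.Nonempty := by
      refine ⟨_, ⟨x₀, hx₀E⟩, 0, ?_, rfl⟩
      intro hcontra
      have hcoe : x₀ = (0 : X) := congrArg Subtype.val hcontra
      rw [hcoe, norm_zero] at hx₀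
      norm_num at hx₀
    have hREsub : {r : ℝ | ∃ e₁ e₂ : ↥E, e₁ ≠ e₂ ∧
        r = ‖T (e₁ : X) - T (e₂ : X)‖ / ‖e₁ - e₂‖}
        ⊆ {r : ℝ | ∃ x₁ x₂ : X, x₁ ≠ x₂ ∧ r = ‖T x₁ - T x₂‖ / ‖x₁ - x₂‖} := by
      rintro r ⟨e₁, e₂, hne, rfl⟩
      exact ⟨e₁, e₂, fun hc => hne (Subtype.ext hc), rfl⟩
    have hREbdd : BddAbove {r : ℝ | ∃ e₁ e₂ : ↥E, e₁ ≠ e₂ ∧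
        r = ‖T (e₁ : X) - T (e₂ : X)‖ / ‖e₁ - e₂‖} := hBdd.mono hREsub
    have hre : lipSemi (fun e : ↥E => T (e : X))
        = sSup {r : ℝ | ∃ e₁ e₂ : ↥E, e₁ ≠ e₂ ∧
          r = ‖T (e₁ : X) - T (e₂ : X)‖ / ‖e₁ - e₂‖} := rfl
    apply le_antisymm
    · rw [hre, hlipdef]
      apply csSup_le hREne
      intro r hr
      exact le_csSup hBdd (hREsub hr)
    · have hstep2 : ∀ n : ℕ, lipSemi T - 1/(n+1) ≤ lipSemi (fun e : ↥E => T (e : X)) := by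
        intro n
        have hmem : ‖T (pa n) - T (pb n)‖ / ‖pa n - pb n‖
            ∈ {r : ℝ | ∃ e₁ e₂ : ↥E, e₁ ≠ e₂ ∧
              r = ‖T (e₁ : X) - T (e₂ : X)‖ / ‖e₁ - e₂‖} := by
          refine ⟨⟨pa n, hpaE n⟩, ⟨pb n, hpbE n⟩, ?_, rfl⟩
          intro hc
          exact hpab n (congrArg Subtype.val hc)
        rw [hre]
        exact (hplt n).le.trans (le_csSup hREbdd hmem)
      by_contra hlt
      push_neg at hlt
      obtain ⟨n, hn⟩ := exists_nat_one_div_lt (sub_pos.2 hlt)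
      linarith [hstep2 n]
  exact ⟨E, Submodule.isClosed_topologicalClosure _,
    by rw [hEset]; exact hΩc.isSeparable.closure, hADP, hTinv, hlipeq⟩
end

section
/- Let X be a complex lush Banach space. Then the Lipschitz numerical index of X satisfies n_L(X) = 1; equivalently, every Lipschitz map T: X → X satisfies v(T) = ‖T‖, where ‖T‖ is the Lipschitz seminorm of T. -/
open Set Metric Topology

/-- Ekeland-type variational principle for a nonnegative continuous function. -/
lemma ekeland_aux {X : Type*} [NormedAddCommGroup X] [CompleteSpace X]
    (φ : X → ℝ) (hc : Continuous φ) (h0 : ∀ z, 0 ≤ φ z) (lam : ℝ) (hlam : 0 < lam)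
    (x₀ : X) :
    ∃ y : X, φ y + lam * ‖y - x₀‖ ≤ φ x₀ ∧ ∀ z, φ y ≤ φ z + lam * ‖z - y‖ := by
  -- choice of next point
  have spec : ∀ (n : ℕ) (x : X), ∃ z : X,
      (φ z + lam * ‖z - x‖ ≤ φ x) ∧
      ∀ z', φ z' + lam * ‖z' - x‖ ≤ φ x → φ z ≤ φ z' + (1/2 : ℝ)^n := by
    intro n x
    set S : Set ℝ := φ '' {z | φ z + lam * ‖z - x‖ ≤ φ x} with hS
    have hxS : φ x ∈ S := ⟨x, by simp, rfl⟩
    have hbdd : BddBelow S := ⟨0, by rintro r ⟨z, _, rfl⟩; exact h0 z⟩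
    have hlt : sInf S < sInf S + (1/2:ℝ)^n := by
      have : (0:ℝ) < (1/2:ℝ)^n := by positivity
      linarith
    obtain ⟨r, hrS, hr⟩ := (csInf_lt_iff hbdd ⟨_, hxS⟩).mp hlt
    obtain ⟨z, hz, rfl⟩ := hrS
    refine ⟨z, hz, fun z' hz' => ?_⟩
    have : sInf S ≤ φ z' := csInf_le hbdd ⟨z', hz', rfl⟩
    linarith
  choose next hnext₁ hnext₂ using spec
  set u : ℕ → X := fun n => Nat.rec x₀ (fun n x => next n x) n with hu
  have hu0 : u 0 = x₀ := rfl
  have husucc : ∀ n, u (n+1) = next n (u n) := fun n => rfl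
  have hstep : ∀ n, φ (u (n+1)) + lam * ‖u (n+1) - u n‖ ≤ φ (u n) := by
    intro n; rw [husucc]; exact hnext₁ n (u n)
  have hmono : ∀ n m, n ≤ m → φ (u m) + lam * ‖u m - u n‖ ≤ φ (u n) := by
    intro n m hnm
    induction m with
    | zero => simp_all
    | succ k ih =>
      rcases Nat.lt_or_ge n (k+1) with hlt | hge
      · have hk : n ≤ k := Nat.lt_succ_iff.mp hlt
        have h1 := hstep k
        have h2 := ih hk
        have htri : ‖u (k+1) - u n‖ ≤ ‖u (k+1) - u k‖ + ‖u k - u n‖ :=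
          norm_sub_le_norm_sub_add_norm_sub _ _ _
        nlinarith [norm_nonneg (u (k+1) - u k), norm_nonneg (u k - u n)]
      · have : n = k + 1 := le_antisymm hnm hge
        subst this; simp
  -- φ ∘ u is antitone and bounded below; converges
  have hanti : ∀ n m, n ≤ m → φ (u m) ≤ φ (u n) := by
    intro n m hnm
    have := hmono n m hnm
    nlinarith [norm_nonneg (u m - u n)]
  -- Cauchy
  have hlb : BddBelow (range (fun n => φ (u n))) := ⟨0, by rintro r ⟨n, rfl⟩; exact h0 _⟩
  set L : ℝ := ⨅ n, φ (u n) with hL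
  have htend : Filter.Tendsto (fun n => φ (u n)) Filter.atTop (nhds L) :=
    tendsto_atTop_ciInf (fun a b hab => hanti a b hab) hlb
  have hgeL : ∀ n, L ≤ φ (u n) := fun n => ciInf_le hlb n
  have hcauchy : CauchySeq u := by
    apply cauchySeq_of_le_tendsto_0 (fun n => (φ (u n) - L) / lam)
    · intro n m N hn hm
      rcases le_total n m with hnm | hmn
      · have := hmono n m hnm
        have h2 : φ (u n) ≤ φ (u N) := hanti N n hn
        rw [dist_eq_norm]
        have : ‖u n - u m‖ ≤ (φ (u n) - L)/lam := by
          rw [le_div_iff₀ hlam, ← norm_neg, neg_sub]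
          nlinarith [hgeL m]
        calc ‖u n - u m‖ ≤ (φ (u n) - L)/lam := this
          _ ≤ (φ (u N) - L)/lam := by gcongr <;> linarith
      · have := hmono m n hmn
        have h2 : φ (u m) ≤ φ (u N) := hanti N m hm
        rw [dist_eq_norm]
        have : ‖u n - u m‖ ≤ (φ (u m) - L)/lam := by
          rw [le_div_iff₀ hlam]
          nlinarith [hgeL n]
        calc ‖u n - u m‖ ≤ (φ (u m) - L)/lam := this
          _ ≤ (φ (u N) - L)/lam := by gcongr <;> linarith
    · have : Filter.Tendsto (fun n => (φ (u n) - L)) Filter.atTop (nhds (L - L)) :=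
        htend.sub tendsto_const_nhds
      simpa using this.div_const lam
  obtain ⟨y, hy⟩ := cauchySeq_tendsto_of_complete hcauchy
  have hφy : φ y = L := by
    have h1 : Filter.Tendsto (fun n => φ (u n)) Filter.atTop (nhds (φ y)) :=
      (hc.continuousAt.tendsto.comp hy)
    exact tendsto_nhds_unique h1 htend
  have hyn : ∀ n, φ y + lam * ‖y - u n‖ ≤ φ (u n) := by
    intro n
    have hlim : Filter.Tendsto (fun m => φ (u m) + lam * ‖u m - u n‖) Filter.atTop
        (nhds (φ y + lam * ‖y - u n‖)) := by
      apply Filter.Tendsto.add (hc.continuousAt.tendsto.comp hy)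
      exact (Filter.Tendsto.norm (hy.sub_const (u n))).const_mul lam
    apply le_of_tendsto hlim
    filter_upwards [Filter.eventually_ge_atTop n] with m hm
    exact hmono n m hm
  refine ⟨y, by simpa [hu0] using hyn 0, ?_⟩
  intro z
  by_contra hcon
  push_neg at hcon
  have hzS : ∀ n, φ z + lam * ‖z - u n‖ ≤ φ (u n) := by
    intro n
    have htri : ‖z - u n‖ ≤ ‖z - y‖ + ‖y - u n‖ := norm_sub_le_norm_sub_add_norm_sub _ _ _
    have := hyn n
    nlinarith
  have hnz : ∀ n, φ (u (n+1)) ≤ φ z + (1/2:ℝ)^n := by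
    intro n
    rw [husucc]
    exact hnext₂ n (u n) z (hzS n)
  have hLz : L ≤ φ z := by
    have h1 : Filter.Tendsto (fun n => φ (u (n+1))) Filter.atTop (nhds L) :=
      htend.comp (Filter.tendsto_add_atTop_nat 1)
    have h2 : Filter.Tendsto (fun n : ℕ => φ z + (1/2:ℝ)^n) Filter.atTop (nhds (φ z + 0)) := by
      apply Filter.Tendsto.add tendsto_const_nhds
      exact tendsto_pow_atTop_nhds_zero_of_lt_one (by norm_num) (by norm_num)
    have := le_of_tendsto_of_tendsto' h1 h2 hnz
    simpa using this
  rw [hφy] at hcon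
  nlinarith [norm_nonneg (z - y), hLz]


lemma norm_le_of_re_bound {X : Type*} [NormedAddCommGroup X] [NormedSpace ℂ X]
    (h : X →L[ℂ] ℂ) (M : ℝ) (hM : 0 ≤ M) (hb : ∀ x, |RCLike.re (h x)| ≤ M * ‖x‖) :
    ‖h‖ ≤ M := by
  apply ContinuousLinearMap.opNorm_le_bound _ hM
  intro x
  by_cases hx : h x = 0
  · rw [hx, norm_zero]; positivity
  · set c : ℂ := (↑‖h x‖ : ℂ) / (h x) with hc
    have hnc : ‖c‖ = 1 := by
      rw [hc, norm_div, Complex.norm_real, Real.norm_eq_abs, abs_norm, div_self]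
      exact norm_ne_zero_iff.mpr hx
    have h1 : h (c • x) = (↑‖h x‖ : ℂ) := by
      rw [map_smul, smul_eq_mul, hc, div_mul_cancel₀ _ hx]
    have h2 : RCLike.re (h (c • x)) = ‖h x‖ := by
      rw [h1]; simp
    calc ‖h x‖ = RCLike.re (h (c • x)) := h2.symm
      _ ≤ |RCLike.re (h (c • x))| := le_abs_self _
      _ ≤ M * ‖c • x‖ := hb _
      _ = M * ‖x‖ := by rw [norm_smul, hnc, one_mul]




set_option maxHeartbeats 1000000 in
/-- Bishop–Phelps–Bollobás theorem (complex case). -/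
lemma bpb_complex {X : Type*} [NormedAddCommGroup X] [NormedSpace ℂ X] [CompleteSpace X]
    (f : X →L[ℂ] ℂ) (hf : ‖f‖ = 1) (z : X) (hz : ‖z‖ = 1) (ε lam : ℝ)
    (hε : 0 < ε) (hεlam : ε < lam)
    (hslice : 1 - RCLike.re (f z) < ε) :
    ∃ (g : X →L[ℂ] ℂ) (y : X), ‖g‖ = 1 ∧ ‖y‖ = 1 ∧ RCLike.re (g y) = 1 ∧
      ‖g - f‖ ≤ lam ∧ ‖y - z‖ ≤ 2 * (ε / lam) := by
  have hlam : 0 < lam := hε.trans hεlam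
  set φ : X → ℝ := fun w => ‖w‖ - RCLike.re (f w) with hφ
  have hc : Continuous φ := continuous_norm.sub (RCLike.continuous_re.comp f.continuous)
  have h0 : ∀ w, 0 ≤ φ w := by
    intro w
    have h1 : RCLike.re (f w) ≤ ‖f w‖ := RCLike.re_le_norm _
    have h2 : ‖f w‖ ≤ ‖f‖ * ‖w‖ := f.le_opNorm w
    simp only [hφ]; rw [hf] at h2; linarith [h2]
  obtain ⟨y₀, hy₁, hy₂⟩ := ekeland_aux φ hc h0 lam hlam z
  have hφz : φ z < ε := by simp only [hφ, hz]; linarith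
  have hy0z : ‖y₀ - z‖ ≤ ε / lam := by
    rw [le_div_iff₀ hlam]
    have := h0 y₀
    nlinarith
  have hy0ne : y₀ ≠ 0 := by
    intro hy0
    rw [hy0, zero_sub, norm_neg, hz] at hy0z
    rw [le_div_iff₀ hlam, one_mul] at hy0z
    linarith
  have hkey : ∀ v, RCLike.re (f v) ≤ ‖y₀ + v‖ - ‖y₀‖ + lam * ‖v‖ := by
    intro v
    have := hy₂ (y₀ + v)
    simp only [hφ, map_add, add_sub_cancel_left] at this
    linarith
  -- the sublinear functional
  set Pset : X → Set ℝ := fun w => {c : ℝ | ∃ (a b : X) (t : ℝ), 0 < t ∧ a + b = w ∧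
    c = (‖y₀ + t • a‖ - ‖y₀‖)/t + (RCLike.re (f b) + lam * ‖b‖)} with hPset
  set P : X → ℝ := fun w => sInf (Pset w) with hP
  have hre_smul : ∀ (t : ℝ) (a : X), RCLike.re (f (t • a)) = t * RCLike.re (f a) := by
    intro t a
    have : f (t • a) = (t : ℂ) • f a := by
      rw [← map_smul]; norm_cast
    rw [this]
    simpa using RCLike.smul_re t (f a)
  have hlow : ∀ w, ∀ c ∈ Pset w, RCLike.re (f w) - lam * ‖w‖ ≤ c := by
    rintro w c ⟨a, b, t, ht, hab, rfl⟩
    have h1 : RCLike.re (f (t • a)) ≤ ‖y₀ + t • a‖ - ‖y₀‖ + lam * ‖t • a‖ := hkey _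
    rw [hre_smul, norm_smul, Real.norm_eq_abs, abs_of_pos ht] at h1
    have h2 : RCLike.re (f a) - lam * ‖a‖ ≤ (‖y₀ + t • a‖ - ‖y₀‖)/t := by
      rw [le_div_iff₀ ht]; nlinarith
    have h3 : RCLike.re (f a) + RCLike.re (f b) = RCLike.re (f w) := by
      rw [← map_add, ← map_add, hab]
    have h4 : ‖a‖ ≤ ‖w‖ + ‖b‖ := by
      calc ‖a‖ = ‖w - b‖ := by rw [← hab, add_sub_cancel_right]
        _ ≤ ‖w‖ + ‖b‖ := norm_sub_le _ _
    nlinarith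
  have hbdd : ∀ w, BddBelow (Pset w) := fun w => ⟨_, hlow w⟩
  have hne : ∀ w, (Pset w).Nonempty := by
    intro w
    exact ⟨(‖y₀ + w‖ - ‖y₀‖) , ⟨w, 0, 1, one_pos, add_zero w, by simp⟩⟩
  have hP1 : ∀ w, P w ≤ ‖w‖ := by
    intro w
    have h1 : P w ≤ ‖y₀ + w‖ - ‖y₀‖ := csInf_le (hbdd w) ⟨w, 0, 1, one_pos, add_zero w, by simp⟩
    have := norm_add_le y₀ w
    linarith
  have hP2 : ∀ w, P w ≤ RCLike.re (f w) + lam * ‖w‖ := by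
    intro w
    exact csInf_le (hbdd w) ⟨0, w, 1, one_pos, zero_add w, by simp⟩
  have hP3 : P (-y₀) ≤ -‖y₀‖ := by
    have : ((‖y₀ + (1:ℝ) • (-y₀)‖ - ‖y₀‖)/1 + (RCLike.re (f 0) + lam * ‖(0:X)‖)) ∈ Pset (-y₀) :=
      ⟨-y₀, 0, 1, one_pos, add_zero _, rfl⟩
    have h2 := csInf_le (hbdd _) this
    simp at h2
    simpa using h2
  have hPlow : ∀ w, RCLike.re (f w) - lam * ‖w‖ ≤ P w := fun w => le_csInf (hne w) (hlow w)
  -- subadditivity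
  have hPsub : ∀ w₁ w₂, P (w₁ + w₂) ≤ P w₁ + P w₂ := by
    intro w₁ w₂
    apply le_of_forall_pos_le_add
    intro δ hδ
    obtain ⟨e₁, he₁, he₁'⟩ := (csInf_lt_iff (hbdd w₁) (hne w₁)).mp
      (lt_add_of_pos_right _ (half_pos hδ))
    obtain ⟨e₂, he₂, he₂'⟩ := (csInf_lt_iff (hbdd w₂) (hne w₂)).mp
      (lt_add_of_pos_right _ (half_pos hδ))
    obtain ⟨a₁, b₁, t₁, ht₁, hab₁, rfl⟩ := he₁
    obtain ⟨a₂, b₂, t₂, ht₂, hab₂, rfl⟩ := he₂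
    set t : ℝ := t₁ * t₂ / (t₁ + t₂) with htdef
    have htsum : 0 < t₁ + t₂ := by linarith
    have ht : 0 < t := by positivity
    set μ : ℝ := t₂ / (t₁ + t₂) with hμdef
    have hμ : 0 < μ := by positivity
    have hμ1 : μ < 1 := by
      rw [hμdef, div_lt_one htsum]; linarith
    have hμt₁ : μ * t₁ = t := by rw [hμdef, htdef]; ring
    have hμt₂ : (1 - μ) * t₂ = t := by
      rw [hμdef, htdef]; field_simp; ring
    have hconv : y₀ + t • (a₁ + a₂) = μ • (y₀ + t₁ • a₁) + (1 - μ) • (y₀ + t₂ • a₂) := by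
      have hy : μ • y₀ + (1 - μ) • y₀ = y₀ := by
        rw [← add_smul]; simp
      calc y₀ + t • (a₁ + a₂) = (μ • y₀ + (1 - μ) • y₀) + ((μ * t₁) • a₁ + ((1 - μ) * t₂) • a₂) := by
            rw [hy, hμt₁, hμt₂, smul_add]
        _ = μ • (y₀ + t₁ • a₁) + (1 - μ) • (y₀ + t₂ • a₂) := by
            rw [smul_add, smul_add, mul_smul, mul_smul]; abel
    have hnorm : ‖y₀ + t • (a₁ + a₂)‖ ≤ μ * ‖y₀ + t₁ • a₁‖ + (1 - μ) * ‖y₀ + t₂ • a₂‖ := by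
      rw [hconv]
      calc ‖μ • (y₀ + t₁ • a₁) + (1 - μ) • (y₀ + t₂ • a₂)‖
          ≤ ‖μ • (y₀ + t₁ • a₁)‖ + ‖(1 - μ) • (y₀ + t₂ • a₂)‖ := norm_add_le _ _
        _ = μ * ‖y₀ + t₁ • a₁‖ + (1 - μ) * ‖y₀ + t₂ • a₂‖ := by
            rw [norm_smul, norm_smul, Real.norm_eq_abs, Real.norm_eq_abs,
              abs_of_pos hμ, abs_of_pos (by linarith : (0:ℝ) < 1 - μ)]
    have hQ : (‖y₀ + t • (a₁ + a₂)‖ - ‖y₀‖)/t ≤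
        (‖y₀ + t₁ • a₁‖ - ‖y₀‖)/t₁ + (‖y₀ + t₂ • a₂‖ - ‖y₀‖)/t₂ := by
      have e1 : (‖y₀ + t • (a₁ + a₂)‖ - ‖y₀‖)/t ≤
          (μ * ‖y₀ + t₁ • a₁‖ + (1 - μ) * ‖y₀ + t₂ • a₂‖ - ‖y₀‖)/t := by
        gcongr
      have e2 : (μ * ‖y₀ + t₁ • a₁‖ + (1 - μ) * ‖y₀ + t₂ • a₂‖ - ‖y₀‖)/t
          = (‖y₀ + t₁ • a₁‖ - ‖y₀‖)/t₁ + (‖y₀ + t₂ • a₂‖ - ‖y₀‖)/t₂ := by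
        rw [hμdef, htdef]
        field_simp
        ring
      linarith
    have hmem : ((‖y₀ + t • (a₁ + a₂)‖ - ‖y₀‖)/t +
        (RCLike.re (f (b₁ + b₂)) + lam * ‖b₁ + b₂‖)) ∈ Pset (w₁ + w₂) := by
      refine ⟨a₁ + a₂, b₁ + b₂, t, ht, ?_, rfl⟩
      rw [← hab₁, ← hab₂]; abel
    have hval : (‖y₀ + t • (a₁ + a₂)‖ - ‖y₀‖)/t + (RCLike.re (f (b₁ + b₂)) + lam * ‖b₁ + b₂‖)
        ≤ ((‖y₀ + t₁ • a₁‖ - ‖y₀‖)/t₁ + (RCLike.re (f b₁) + lam * ‖b₁‖))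
          + ((‖y₀ + t₂ • a₂‖ - ‖y₀‖)/t₂ + (RCLike.re (f b₂) + lam * ‖b₂‖)) := by
      have hb : ‖b₁ + b₂‖ ≤ ‖b₁‖ + ‖b₂‖ := norm_add_le _ _
      have hrb : RCLike.re (f (b₁ + b₂)) = RCLike.re (f b₁) + RCLike.re (f b₂) := by
        rw [map_add, map_add]
      nlinarith
    have := csInf_le (hbdd (w₁ + w₂)) hmem
    calc P (w₁ + w₂) ≤ _ := this
      _ ≤ _ := hval
      _ ≤ P w₁ + δ/2 + (P w₂ + δ/2) := by gcongr <;> linarith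
      _ = P w₁ + P w₂ + δ := by ring
  -- positive homogeneity
  have hPhom_le : ∀ (c : ℝ), 0 < c → ∀ w, P (c • w) ≤ c * P w := by
    intro c hc w
    have hmaps : ∀ e ∈ Pset w, c * e ∈ Pset (c • w) := by
      rintro e ⟨a, b, t, ht, hab, rfl⟩
      refine ⟨c • a, c • b, t/c, by positivity, by rw [← smul_add, hab], ?_⟩
      have h1 : (t/c) • (c • a) = t • a := by
        rw [smul_smul, div_mul_cancel₀ _ (ne_of_gt hc)]
      rw [h1, hre_smul, norm_smul, Real.norm_eq_abs, abs_of_pos hc, div_div_eq_mul_div]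
      ring
    have : ∀ e ∈ Pset w, P (c • w) ≤ c * e := fun e he => csInf_le (hbdd _) (hmaps e he)
    have h2 : P (c • w) / c ≤ P w := by
      apply le_csInf (hne w)
      intro e he
      rw [div_le_iff₀ hc, mul_comm]
      exact this e he
    calc P (c • w) = c * (P (c • w) / c) := by field_simp
      _ ≤ c * P w := by
          apply mul_le_mul_of_nonneg_left h2 (le_of_lt hc)
  have hPhom : ∀ (c : ℝ), 0 < c → ∀ w, P (c • w) = c * P w := by
    intro c hc w
    refine le_antisymm (hPhom_le c hc w) ?_
    have h1 : P w ≤ c⁻¹ * P (c • w) := by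
      have := hPhom_le c⁻¹ (by positivity) (c • w)
      rwa [inv_smul_smul₀ (ne_of_gt hc)] at this
    calc c * P w ≤ c * (c⁻¹ * P (c • w)) := by
          apply mul_le_mul_of_nonneg_left h1 (le_of_lt hc)
      _ = P (c • w) := by field_simp
  -- Hahn-Banach
  have hP0 : (0:ℝ) ≤ P 0 := by
    have := hPlow 0
    simpa using this
  obtain ⟨G, -, hGP⟩ := exists_extension_of_le_sublinear ⟨⊥, 0⟩ P hPhom hPsub
    (by rintro ⟨x, hx⟩
        rcases (Submodule.mem_bot ℝ).mp hx with rfl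
        simpa using hP0)
  have hGnorm : ∀ x, |G x| ≤ ‖x‖ := by
    intro x
    rw [abs_le]
    constructor
    · have h1 : G (-x) ≤ P (-x) := hGP (-x)
      have h2 := hP1 (-x)
      rw [map_neg, norm_neg] at *
      linarith
    · exact (hGP x).trans (hP1 x)
  set Gc : X →L[ℝ] ℝ := LinearMap.mkContinuous G 1
    (fun x => by rw [Real.norm_eq_abs, one_mul]; exact hGnorm x) with hGc
  have hGcapp : ∀ x, Gc x = G x := fun x => rfl
  have hGy₀ : Gc y₀ = ‖y₀‖ := by
    rw [hGcapp]
    refine le_antisymm ((le_abs_self _).trans (hGnorm _)) ?_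
    have h1 : G (-y₀) ≤ P (-y₀) := hGP _
    rw [map_neg] at h1
    linarith [hP3]
  have hGf : ∀ x, |Gc x - RCLike.re (f x)| ≤ lam * ‖x‖ := by
    intro x
    rw [hGcapp, abs_le]
    constructor
    · have h1 : G (-x) ≤ P (-x) := hGP _
      have h2 := hP2 (-x)
      rw [map_neg] at h1
      rw [map_neg, map_neg, norm_neg] at h2
      linarith
    · have h1 : G x ≤ P x := hGP _
      linarith [hP2 x]
  -- complexification
  set g : X →L[ℂ] ℂ := Gc.extendTo𝕜' with hg
  have hgre : ∀ x, RCLike.re (g x) = Gc x := by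
    intro x
    have : g x = ((Gc x : ℝ) : ℂ) - (RCLike.I : ℂ) * ((Gc ((RCLike.I : ℂ) • x) : ℝ) : ℂ) :=
      ContinuousLinearMap.extendTo𝕜'_apply Gc x
    rw [this]
    simp
  have hgnorm : ‖g‖ ≤ 1 := norm_le_of_re_bound g 1 zero_le_one
    (fun x => by rw [hgre, one_mul]; exact hGnorm x)
  have hgf : ‖g - f‖ ≤ lam := by
    apply norm_le_of_re_bound _ lam (le_of_lt hlam)
    intro x
    rw [ContinuousLinearMap.sub_apply, map_sub, hgre]
    exact hGf x
  set y : X := ‖y₀‖⁻¹ • y₀ with hy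
  have hyn : ‖y‖ = 1 := norm_smul_inv_norm hy0ne
  have hgy : RCLike.re (g y) = 1 := by
    have h1 : g y = (‖y₀‖⁻¹ : ℝ) • g y₀ := by
      have hcast : y = ((‖y₀‖⁻¹ : ℝ) : ℂ) • y₀ := by rw [hy]; norm_cast
      rw [hcast, map_smul]
      norm_cast
    rw [h1, RCLike.smul_re, hgre, hGy₀, inv_mul_cancel₀ (norm_ne_zero_iff.mpr hy0ne)]
  have hgnorm1 : ‖g‖ = 1 := by
    refine le_antisymm hgnorm ?_
    calc (1:ℝ) = RCLike.re (g y) := hgy.symm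
      _ ≤ ‖g y‖ := RCLike.re_le_norm _
      _ ≤ ‖g‖ * ‖y‖ := g.le_opNorm y
      _ = ‖g‖ := by rw [hyn, mul_one]
  refine ⟨g, y, hgnorm1, hyn, hgy, hgf, ?_⟩
  have h1 : ‖y - y₀‖ = |1 - ‖y₀‖| := by
    have : y - y₀ = (‖y₀‖⁻¹ - 1) • y₀ := by rw [hy, sub_smul, one_smul]
    rw [this, norm_smul, Real.norm_eq_abs]
    rw [abs_sub_comm, ← abs_of_pos (norm_pos_iff.mpr hy0ne), ← abs_mul, abs_of_pos (norm_pos_iff.mpr hy0ne)]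
    rw [sub_mul, one_mul, mul_comm, mul_inv_cancel₀ (norm_ne_zero_iff.mpr hy0ne)]
    rw [abs_sub_comm]
  have h2 : |1 - ‖y₀‖| ≤ ‖y₀ - z‖ := by
    rw [← hz, abs_sub_comm]
    exact abs_norm_sub_norm_le _ _
  calc ‖y - z‖ ≤ ‖y - y₀‖ + ‖y₀ - z‖ := norm_sub_le_norm_sub_add_norm_sub _ _ _
    _ ≤ ‖y₀ - z‖ + ‖y₀ - z‖ := by rw [h1]; linarith
    _ ≤ ε/lam + ε/lam := by linarith
    _ = 2 * (ε/lam) := by ring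

section Aux
variable {X : Type*} [NormedAddCommGroup X] [NormedSpace ℂ X]

/-- The slope set of `T`. -/
def Rset (T : X → X) : Set ℝ := {r : ℝ | ∃ x₁ x₂ : X, x₁ ≠ x₂ ∧ r = ‖T x₁ - T x₂‖ / ‖x₁ - x₂‖}

/-- The numerical-radius value set of `T`. -/
def Vset (T : X → X) : Set ℝ := {r : ℝ | ∃ (x y : X) (f : X →L[ℂ] ℂ), x ≠ y ∧
    RCLike.re (f (x - y)) = ‖f‖ * ‖x - y‖ ∧ ‖f‖ * ‖x - y‖ = ‖x - y‖ ^ 2 ∧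
    r = ‖f (T x - T y)‖ / ‖x - y‖ ^ 2}

lemma lipSemi_eq (T : X → X) : lipSemi T = sSup (Rset T) := rfl

lemma lipNumRadius_eq (T : X → X) : lipNumRadius ℂ T = sSup (Vset T) := rfl

lemma Rset_bddAbove (T : X → X) (C : NNReal) (hT : LipschitzWith C T) :
    BddAbove (Rset T) := by
  refine ⟨C, ?_⟩
  rintro r ⟨x₁, x₂, hne, rfl⟩
  have hd : (0:ℝ) < ‖x₁ - x₂‖ := by
    rw [norm_pos_iff, sub_ne_zero]; exact hne
  rw [div_le_iff₀ hd]
  have := hT.dist_le_mul x₁ x₂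
  rwa [dist_eq_norm, dist_eq_norm] at this

lemma Rset_nonempty [Nontrivial X] (T : X → X) : (Rset T).Nonempty := by
  obtain ⟨a, b, hab⟩ := exists_pair_ne X
  exact ⟨_, a, b, hab, rfl⟩

lemma lipSemi_nonneg [Nontrivial X] (T : X → X) (C : NNReal) (hT : LipschitzWith C T) :
    0 ≤ lipSemi T := by
  obtain ⟨r, x₁, x₂, hne, rfl⟩ := Rset_nonempty T
  have h1 : (0:ℝ) ≤ ‖T x₁ - T x₂‖ / ‖x₁ - x₂‖ := by positivity
  exact h1.trans (le_csSup (Rset_bddAbove T C hT) ⟨x₁, x₂, hne, rfl⟩)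

lemma norm_sub_le_lipSemi [Nontrivial X] (T : X → X) (C : NNReal) (hT : LipschitzWith C T)
    (a b : X) : ‖T a - T b‖ ≤ lipSemi T * ‖a - b‖ := by
  rcases eq_or_ne a b with rfl | hne
  · simp
  · have hd : (0:ℝ) < ‖a - b‖ := by rw [norm_pos_iff, sub_ne_zero]; exact hne
    have h1 : ‖T a - T b‖ / ‖a - b‖ ≤ lipSemi T :=
      le_csSup (Rset_bddAbove T C hT) ⟨a, b, hne, rfl⟩
    calc ‖T a - T b‖ = ‖T a - T b‖ / ‖a - b‖ * ‖a - b‖ := by field_simp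
      _ ≤ lipSemi T * ‖a - b‖ := by gcongr

lemma Vset_nonneg (T : X → X) : ∀ r ∈ Vset T, 0 ≤ r := by
  rintro r ⟨x, y, f, hne, h1, h2, rfl⟩
  positivity

lemma Vset_bddAbove' [Nontrivial X] (T : X → X) (C : NNReal) (hT : LipschitzWith C T) :
    ∀ r ∈ Vset T, r ≤ lipSemi T := by
  rintro r ⟨x, y, f, hne, h1, h2, rfl⟩
  have hd : (0:ℝ) < ‖x - y‖ := by rw [norm_pos_iff, sub_ne_zero]; exact hne
  have hfn : ‖f‖ = ‖x - y‖ := by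
    have := h2
    rw [sq] at this
    exact mul_right_cancel₀ (ne_of_gt hd) this
  have hb : ‖f (T x - T y)‖ ≤ ‖x - y‖ * (lipSemi T * ‖x - y‖) := by
    calc ‖f (T x - T y)‖ ≤ ‖f‖ * ‖T x - T y‖ := f.le_opNorm _
      _ ≤ ‖x - y‖ * (lipSemi T * ‖x - y‖) := by
          rw [hfn]; gcongr; exact norm_sub_le_lipSemi T C hT x y
  rw [div_le_iff₀ (by positivity)]
  calc ‖f (T x - T y)‖ ≤ ‖x - y‖ * (lipSemi T * ‖x - y‖) := hb
    _ = lipSemi T * ‖x - y‖ ^ 2 := by ring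

lemma Vset_bddAbove [Nontrivial X] (T : X → X) (C : NNReal) (hT : LipschitzWith C T) :
    BddAbove (Vset T) := ⟨lipSemi T, Vset_bddAbove' T C hT⟩

lemma Vset_nonempty [Nontrivial X] [CompleteSpace X] (T : X → X) : (Vset T).Nonempty := by
  obtain ⟨a, b, hab⟩ := exists_pair_ne X
  have hd : (0:ℝ) < ‖a - b‖ := by rw [norm_pos_iff, sub_ne_zero]; exact hab
  obtain ⟨f₀, hf₀, hf₀ab⟩ := exists_dual_vector ℂ (a - b) (norm_ne_zero_iff.mpr (sub_ne_zero.mpr hab))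
  have hnc : ‖((‖a - b‖ : ℝ) : ℂ)‖ = ‖a - b‖ := by
    rw [Complex.norm_real, Real.norm_eq_abs, abs_of_pos hd]
  refine ⟨_, a, b, ((‖a - b‖ : ℝ) : ℂ) • f₀, hab, ?_, ?_, rfl⟩
  · rw [ContinuousLinearMap.smul_apply, hf₀ab, smul_eq_mul,
      norm_smul ((‖a - b‖ : ℝ) : ℂ) f₀, hnc, hf₀, mul_one]
    simp [RCLike.re_to_complex, Complex.mul_re]
  · rw [norm_smul ((‖a - b‖ : ℝ) : ℂ) f₀, hnc, hf₀, mul_one, sq]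

/-- Key admissibility: a unit functional exactly norming a unit direction yields a
numerical-radius bound along that direction. -/
lemma slope_bound [Nontrivial X] (T : X → X) (C : NNReal) (hT : LipschitzWith C T)
    (G : X →L[ℂ] ℂ) (d : X) (hd : ‖d‖ = 1) (hG : ‖G‖ = 1) (hGd : RCLike.re (G d) = 1)
    (p : X) (s : ℝ) (hs : 0 < s) :
    ‖G (T (p + s • d) - T p)‖ ≤ s * sSup (Vset T) := by
  set x : X := p + s • d with hx
  have hxy : x - p = s • d := by rw [hx, add_sub_cancel_left]
  have hnxy : ‖x - p‖ = s := by
    rw [hxy, norm_smul, Real.norm_eq_abs, abs_of_pos hs, hd, mul_one]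
  have hne : x ≠ p := by
    intro hcon
    rw [hcon, sub_self] at hxy
    have : ‖(0:X)‖ = s := by rw [← hnxy, hcon, sub_self]
    simp at this
    linarith
  have hsc : ‖((s:ℝ) : ℂ)‖ = s := by
    rw [Complex.norm_real, Real.norm_eq_abs, abs_of_pos hs]
  set H : X →L[ℂ] ℂ := ((s:ℝ) : ℂ) • G with hH
  have hHnorm : ‖H‖ = s := by
    rw [hH, norm_smul ((s:ℝ) : ℂ) G, hsc, hG, mul_one]
  have hcast : (s : ℝ) • d = ((s:ℝ) : ℂ) • d := by norm_cast
  have hval : H (x - p) = ((s : ℝ) : ℂ) * (((s : ℝ) : ℂ) * G d) := by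
    rw [hH, ContinuousLinearMap.smul_apply, hxy, hcast, G.map_smul, smul_eq_mul, smul_eq_mul]
  have hHre : RCLike.re (H (x - p)) = s * s := by
    rw [hval, ← mul_assoc, ← Complex.ofReal_mul]
    have h1 : RCLike.re (((s*s : ℝ) : ℂ) * G d) = (s*s) * RCLike.re (G d) :=
      RCLike.re_ofReal_mul _ _
    rw [h1, hGd, mul_one]
  have hmem : ‖H (T x - T p)‖ / ‖x - p‖ ^ 2 ∈ Vset T := by
    refine ⟨x, p, H, hne, ?_, ?_, rfl⟩
    · rw [hHre, hHnorm, hnxy]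
    · rw [hHnorm, hnxy, sq]
  have hle : ‖H (T x - T p)‖ / ‖x - p‖ ^ 2 ≤ sSup (Vset T) :=
    le_csSup (Vset_bddAbove T C hT) hmem
  have hHT : ‖H (T x - T p)‖ = s * ‖G (T x - T p)‖ := by
    rw [hH, ContinuousLinearMap.smul_apply, norm_smul, hsc]
  rw [hnxy, hHT] at hle
  rw [div_le_iff₀ (by positivity)] at hle
  have hfinal : ‖G (T x - T p)‖ ≤ s * sSup (Vset T) := by
    nlinarith [norm_nonneg (G (T x - T p))]
  exact hfinal

/-- Telescoping estimate along a broken path in almost-norming directions. -/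
lemma telescope [Nontrivial X] (T : X → X) (C : NNReal) (hT : LipschitzWith C T)
    (f : X →L[ℂ] ℂ) (hf : ‖f‖ = 1) (η : ℝ) (hη : 0 ≤ η) (D : ℝ) (hD : 0 < D)
    (hV0 : 0 ≤ sSup (Vset T))
    (l : List (ℝ × X × (X →L[ℂ] ℂ)))
    (hl : ∀ e ∈ l, 0 ≤ e.1 ∧ ‖e.2.1‖ = 1 ∧ ‖e.2.2‖ = 1 ∧ RCLike.re (e.2.2 e.2.1) = 1 ∧
      ∀ v : X, ‖f v‖ ≤ ‖e.2.2 v‖ + η * ‖v‖) :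
    ∀ p : X, ‖f (T (p + D • (l.map (fun e => e.1 • e.2.1)).sum) - T p)‖ ≤
      (l.map Prod.fst).sum * (D * (sSup (Vset T) + η * lipSemi T)) := by
  have hL0 : 0 ≤ lipSemi T := lipSemi_nonneg T C hT
  have hB0 : 0 ≤ sSup (Vset T) + η * lipSemi T := by positivity
  induction l with
  | nil => intro p; simp
  | cons e l ih =>
    intro p
    obtain ⟨hw, hdn, hGn, hGd, hcmp⟩ := hl e List.mem_cons_self
    have hl' : ∀ e' ∈ l, _ := fun e' he' => hl e' (List.mem_cons_of_mem e he')
    set q : X := p + (D * e.1) • e.2.1 with hq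
    have hpt : p + D • ((e :: l).map (fun e => e.1 • e.2.1)).sum
        = q + D • (l.map (fun e => e.1 • e.2.1)).sum := by
      rw [List.map_cons, List.sum_cons, smul_add, hq, smul_smul]
      abel
    have hsum : ((e :: l).map Prod.fst).sum = e.1 + (l.map Prod.fst).sum := by
      rw [List.map_cons, List.sum_cons]
    rcases eq_or_lt_of_le hw with hw0 | hwpos
    · -- weight zero: the step is trivial
      have hq' : q = p := by rw [hq, ← hw0, mul_zero, zero_smul, add_zero]
      rw [hpt, hq', hsum, ← hw0]
      calc ‖f (T (p + D • (l.map (fun e => e.1 • e.2.1)).sum) - T p)‖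
          ≤ (l.map Prod.fst).sum * (D * (sSup (Vset T) + η * lipSemi T)) := ih hl' p
        _ ≤ (0 + (l.map Prod.fst).sum) * (D * (sSup (Vset T) + η * lipSemi T)) := by
            rw [zero_add]
    · have hs : 0 < D * e.1 := by positivity
      have hstep : ‖f (T q - T p)‖ ≤ (D * e.1) * (sSup (Vset T) + η * lipSemi T) := by
        have h1 : ‖f (T q - T p)‖ ≤ ‖e.2.2 (T q - T p)‖ + η * ‖T q - T p‖ := hcmp _
        have h2 : ‖e.2.2 (T q - T p)‖ ≤ (D * e.1) * sSup (Vset T) := by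
          have := slope_bound T C hT e.2.2 e.2.1 hdn hGn hGd p (D * e.1) hs
          rw [hq]
          exact this
        have h3 : ‖T q - T p‖ ≤ lipSemi T * (D * e.1) := by
          have h4 : ‖q - p‖ = D * e.1 := by
            rw [hq, add_sub_cancel_left, norm_smul, Real.norm_eq_abs, abs_of_pos hs, hdn,
              mul_one]
          calc ‖T q - T p‖ ≤ lipSemi T * ‖q - p‖ := norm_sub_le_lipSemi T C hT q p
            _ = lipSemi T * (D * e.1) := by rw [h4]
        nlinarith
      calc ‖f (T (p + D • ((e :: l).map (fun e => e.1 • e.2.1)).sum) - T p)‖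
          = ‖f ((T (q + D • (l.map (fun e => e.1 • e.2.1)).sum) - T q) + (T q - T p))‖ := by
            rw [hpt, sub_add_sub_cancel]
        _ ≤ ‖f (T (q + D • (l.map (fun e => e.1 • e.2.1)).sum) - T q)‖ + ‖f (T q - T p)‖ := by
            rw [map_add]; exact norm_add_le _ _
        _ ≤ (l.map Prod.fst).sum * (D * (sSup (Vset T) + η * lipSemi T))
            + (D * e.1) * (sSup (Vset T) + η * lipSemi T) := add_le_add (ih hl' q) hstep
        _ = ((e :: l).map Prod.fst).sum * (D * (sSup (Vset T) + η * lipSemi T)) := by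
            rw [hsum]; ring
end Aux

set_option maxHeartbeats 1000000 in
theorem key_thm {X : Type*} [NormedAddCommGroup X]
    [NormedSpace ℂ X] [CompleteSpace X] [Nontrivial X] (h : Lush ℂ X)
    (T : X → X) (hTlip : ∃ C, LipschitzWith C T) : lipNumRadius ℂ T = lipSemi T := by
  obtain ⟨C, hT⟩ := hTlip
  rw [lipNumRadius_eq, lipSemi_eq]
  have hVb := Vset_bddAbove T C hT
  have hVne := Vset_nonempty T
  have hRb := Rset_bddAbove T C hT
  have hRne := Rset_nonempty T
  have hV0 : 0 ≤ sSup (Vset T) := by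
    obtain ⟨r, hr⟩ := hVne
    exact (Vset_nonneg T r hr).trans (le_csSup hVb hr)
  have hL0 : 0 ≤ lipSemi T := lipSemi_nonneg T C hT
  apply le_antisymm
  · exact csSup_le hVne (fun r hr => Vset_bddAbove' T C hT r hr)
  · apply csSup_le hRne
    rintro r ⟨x₁, x₂, hne12, rfl⟩
    have hD : (0:ℝ) < ‖x₁ - x₂‖ := by rw [norm_pos_iff, sub_ne_zero]; exact hne12
    set D : ℝ := ‖x₁ - x₂‖ with hDdef
    rcases eq_or_ne (T x₁) (T x₂) with hTeq | hTne
    · rw [hTeq, sub_self, norm_zero, zero_div]; exact hV0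
    · have hN : (0:ℝ) < ‖T x₁ - T x₂‖ := by rw [norm_pos_iff, sub_ne_zero]; exact hTne
      set N : ℝ := ‖T x₁ - T x₂‖ with hNdef
      set L : ℝ := lipSemi T with hLdef
      set S : ℝ := sSup (Vset T) with hSdef
      -- the main estimate for each small ε
      have key2 : ∀ ε : ℝ, 0 < ε → ε < 1/4 →
          N * (1 - ε) ≤ D * (S + L * ε + 3 * L * Real.sqrt ε) := by
        intro ε hε hε4
        have hε1 : ε < 1 := by linarith
        have hsq : 0 < Real.sqrt ε := Real.sqrt_pos.mpr hε
        have hεsq : ε < Real.sqrt ε := by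
          have h1 : Real.sqrt (ε^2) < Real.sqrt ε := Real.sqrt_lt_sqrt (by positivity) (by nlinarith)
          rwa [Real.sqrt_sq hε.le] at h1
        set u : X := ‖x₁ - x₂‖⁻¹ • (x₁ - x₂) with hu
        set w : X := ‖T x₁ - T x₂‖⁻¹ • (T x₁ - T x₂) with hw
        have hu1 : ‖u‖ = 1 := norm_smul_inv_norm (sub_ne_zero.mpr hne12)
        have hw1 : ‖w‖ = 1 := norm_smul_inv_norm (sub_ne_zero.mpr hTne)
        obtain ⟨f, hf1, hwslice, hdist⟩ := h u w hu1 hw1 ε hε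
        obtain ⟨-, hrew⟩ := hwslice
        have hCne : (convexHull ℝ (circleSmul ℂ (sphereSlice ℂ f ε))).Nonempty := by
          refine ⟨w, subset_convexHull _ _ ⟨1, w, norm_one, ⟨hw1, hrew⟩, (one_smul ℂ w).symm⟩⟩
        obtain ⟨c, hcmem, hcd⟩ := (infDist_lt_iff hCne).mp hdist
        rw [convexHull_eq] at hcmem
        obtain ⟨ι, t, wt, zf, hw0, hwsum1, hzmem, hcent⟩ := hcmem
        have hcsum : ∑ i ∈ t, wt i • zf i = c := by
          rw [← hcent, Finset.centerMass_eq_of_sum_1 _ _ hwsum1]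
        have hchoice : ∀ i ∈ t, ∃ (θ : ℂ) (g : X →L[ℂ] ℂ) (y : X), ‖θ‖ = 1 ∧ ‖g‖ = 1 ∧
            ‖y‖ = 1 ∧ RCLike.re (g y) = 1 ∧ ‖g - f‖ ≤ Real.sqrt ε ∧
            ‖θ • y - zf i‖ ≤ 2 * Real.sqrt ε := by
          intro i hi
          obtain ⟨θ, ζ, hθ, hζmem, hzeq⟩ := hzmem i hi
          obtain ⟨hζ1, hζre⟩ := hζmem
          obtain ⟨g, y, hg1, hy1, hgy, hgf, hyζ⟩ :=
            bpb_complex f hf1 ζ hζ1 ε (Real.sqrt ε) hε hεsq (by linarith)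
          refine ⟨θ, g, y, hθ, hg1, hy1, hgy, hgf, ?_⟩
          have h1 : θ • y - zf i = θ • (y - ζ) := by rw [hzeq, smul_sub]
          rw [h1, norm_smul θ (y - ζ), hθ, one_mul]
          calc ‖y - ζ‖ ≤ 2 * (ε / Real.sqrt ε) := hyζ
            _ = 2 * Real.sqrt ε := by rw [Real.div_sqrt]
        choose! θf gf yf hθf hgf1 hyf1 hgyf hgff hθyf using hchoice
        set l : List (ℝ × X × (X →L[ℂ] ℂ)) :=
          t.toList.map (fun i => (wt i, θf i • yf i, (θf i)⁻¹ • gf i)) with hldef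
        have hmem_of : ∀ e ∈ l, ∃ i ∈ t, e = (wt i, θf i • yf i, (θf i)⁻¹ • gf i) := by
          intro e he
          rw [hldef, List.mem_map] at he
          obtain ⟨i, hi, rfl⟩ := he
          exact ⟨i, Finset.mem_toList.mp hi, rfl⟩
        have hl : ∀ e ∈ l, 0 ≤ e.1 ∧ ‖e.2.1‖ = 1 ∧ ‖e.2.2‖ = 1 ∧
            RCLike.re (e.2.2 e.2.1) = 1 ∧
            ∀ v : X, ‖f v‖ ≤ ‖e.2.2 v‖ + Real.sqrt ε * ‖v‖ := by
          intro e he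
          obtain ⟨i, hi, rfl⟩ := hmem_of e he
          have hθne : θf i ≠ 0 := by
            intro hcon
            have h1 := hθf i hi
            rw [hcon, norm_zero] at h1
            exact one_ne_zero h1.symm
          have hθinv : ‖(θf i)⁻¹‖ = 1 := by
            rw [norm_inv, hθf i hi, inv_one]
          refine ⟨hw0 i hi, ?_, ?_, ?_, ?_⟩
          · rw [norm_smul (θf i) (yf i), hθf i hi, one_mul, hyf1 i hi]
          · rw [norm_smul ((θf i)⁻¹) (gf i), hθinv, one_mul, hgf1 i hi]
          · show RCLike.re (((θf i)⁻¹ • gf i) (θf i • yf i)) = 1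
            have hval : ((θf i)⁻¹ • gf i) (θf i • yf i) = gf i (yf i) := by
              rw [ContinuousLinearMap.smul_apply, ContinuousLinearMap.map_smul,
                smul_eq_mul, smul_eq_mul, ← mul_assoc, inv_mul_cancel₀ hθne, one_mul]
            rw [hval]
            exact hgyf i hi
          · intro v
            have h1 : ‖((θf i)⁻¹ • gf i) v‖ = ‖gf i v‖ := by
              rw [ContinuousLinearMap.smul_apply, smul_eq_mul, norm_mul, hθinv, one_mul]
            have h2 : ‖f v - gf i v‖ ≤ Real.sqrt ε * ‖v‖ := by
              have h3 : ‖(f - gf i) v‖ ≤ ‖f - gf i‖ * ‖v‖ := (f - gf i).le_opNorm v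
              rw [ContinuousLinearMap.sub_apply] at h3
              have h4 : ‖f - gf i‖ = ‖gf i - f‖ := norm_sub_rev _ _
              calc ‖f v - gf i v‖ ≤ ‖f - gf i‖ * ‖v‖ := h3
                _ = ‖gf i - f‖ * ‖v‖ := by rw [h4]
                _ ≤ Real.sqrt ε * ‖v‖ := by
                    apply mul_le_mul_of_nonneg_right (hgff i hi) (norm_nonneg v)
            rw [h1]
            calc ‖f v‖ = ‖gf i v + (f v - gf i v)‖ := by ring_nf
              _ ≤ ‖gf i v‖ + ‖f v - gf i v‖ := norm_add_le _ _
              _ ≤ ‖gf i v‖ + Real.sqrt ε * ‖v‖ := by linarith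
        set c' : X := ∑ i ∈ t, wt i • (θf i • yf i) with hc'
        have hlsum1 : (l.map Prod.fst).sum = 1 := by
          rw [hldef, List.map_map]
          have : ((fun e : ℝ × X × (X →L[ℂ] ℂ) => e.1) ∘
              (fun i => (wt i, θf i • yf i, (θf i)⁻¹ • gf i))) = wt := rfl
          rw [this, Finset.sum_map_toList, hwsum1]
        have hlsum2 : (l.map (fun e => e.1 • e.2.1)).sum = c' := by
          rw [hldef, List.map_map, hc']
          exact Finset.sum_map_toList t _
        have hc'c : ‖c' - c‖ ≤ 2 * Real.sqrt ε := by
          rw [hc', ← hcsum, ← Finset.sum_sub_distrib]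
          calc ‖∑ i ∈ t, (wt i • (θf i • yf i) - wt i • zf i)‖
              ≤ ∑ i ∈ t, ‖wt i • (θf i • yf i) - wt i • zf i‖ := norm_sum_le _ _
            _ ≤ ∑ i ∈ t, wt i * (2 * Real.sqrt ε) := by
                apply Finset.sum_le_sum
                intro i hi
                rw [← smul_sub, norm_smul, Real.norm_eq_abs, abs_of_nonneg (hw0 i hi)]
                exact mul_le_mul_of_nonneg_left (hθyf i hi) (hw0 i hi)
            _ = 2 * Real.sqrt ε := by rw [← Finset.sum_mul, hwsum1, one_mul]
        have huc : ‖c - u‖ < ε := by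
          rw [← dist_eq_norm, dist_comm]
          exact hcd
        have hDu : D • u = x₁ - x₂ := by
          rw [hu, smul_inv_smul₀ (ne_of_gt hD)]
        have hNw : N • w = T x₁ - T x₂ := by
          rw [hw, smul_inv_smul₀ (ne_of_gt hN)]
        have hend : ‖x₁ - (x₂ + D • c')‖ ≤ D * (ε + 2 * Real.sqrt ε) := by
          have h1 : x₁ - (x₂ + D • c') = D • u - D • c' := by
            rw [hDu]; abel
          rw [h1, ← smul_sub, norm_smul, Real.norm_eq_abs, abs_of_pos hD]
          have h2 : ‖u - c'‖ ≤ ε + 2 * Real.sqrt ε := by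
            calc ‖u - c'‖ ≤ ‖u - c‖ + ‖c - c'‖ := norm_sub_le_norm_sub_add_norm_sub _ _ _
              _ ≤ ε + 2 * Real.sqrt ε := by
                  rw [norm_sub_rev u c, norm_sub_rev c c']
                  exact add_le_add huc.le hc'c
          exact mul_le_mul_of_nonneg_left h2 hD.le
        have htel := telescope T C hT f hf1 (Real.sqrt ε) hsq.le D hD hV0 l hl x₂
        rw [hlsum1, hlsum2, one_mul] at htel
        -- lower bound
        have hlow1 : N * (1 - ε) ≤ RCLike.re (f (T x₁ - T x₂)) := by
          rw [← hNw]
          have hcast : N • w = ((N : ℝ) : ℂ) • w := by norm_cast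
          rw [hcast, map_smul, smul_eq_mul]
          have h1 : RCLike.re (((N:ℝ):ℂ) * f w) = N * RCLike.re (f w) :=
            RCLike.re_ofReal_mul _ _
          rw [h1]
          have := hrew
          nlinarith
        have hup : RCLike.re (f (T x₁ - T x₂)) ≤
            D * (S + Real.sqrt ε * L) + L * (D * (ε + 2 * Real.sqrt ε)) := by
          have hsplit : f (T x₁ - T x₂) =
              f (T (x₂ + D • c') - T x₂) + f (T x₁ - T (x₂ + D • c')) := by
            rw [← map_add, sub_add_sub_cancel']
          have h2 : ‖f (T x₁ - T (x₂ + D • c'))‖ ≤ L * (D * (ε + 2 * Real.sqrt ε)) := by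
            calc ‖f (T x₁ - T (x₂ + D • c'))‖ ≤ ‖f‖ * ‖T x₁ - T (x₂ + D • c')‖ :=
                  f.le_opNorm _
              _ = ‖T x₁ - T (x₂ + D • c')‖ := by rw [hf1, one_mul]
              _ ≤ L * ‖x₁ - (x₂ + D • c')‖ := norm_sub_le_lipSemi T C hT _ _
              _ ≤ L * (D * (ε + 2 * Real.sqrt ε)) :=
                  mul_le_mul_of_nonneg_left hend hL0
          calc RCLike.re (f (T x₁ - T x₂)) ≤ ‖f (T x₁ - T x₂)‖ := RCLike.re_le_norm _
            _ ≤ ‖f (T (x₂ + D • c') - T x₂)‖ + ‖f (T x₁ - T (x₂ + D • c'))‖ := by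
                rw [hsplit]; exact norm_add_le _ _
            _ ≤ D * (S + Real.sqrt ε * L) + L * (D * (ε + 2 * Real.sqrt ε)) :=
                add_le_add htel h2
        calc N * (1 - ε) ≤ RCLike.re (f (T x₁ - T x₂)) := hlow1
          _ ≤ D * (S + Real.sqrt ε * L) + L * (D * (ε + 2 * Real.sqrt ε)) := hup
          _ = D * (S + L * ε + 3 * L * Real.sqrt ε) := by ring
      -- conclude from key2 by letting ε → 0
      have hfin : N / D ≤ S := by
        apply le_of_forall_pos_le_add
        intro η hη
        set K : ℝ := N / D + 4 * L + 1 with hK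
        have hK0 : 0 < K := by positivity
        set ε : ℝ := min (1/8) ((η/K)^2) with hε
        have hεpos : 0 < ε := by
          apply lt_min (by norm_num)
          positivity
        have hε4 : ε < 1/4 := by
          calc ε ≤ 1/8 := min_le_left _ _
            _ < 1/4 := by norm_num
        have h2 := key2 ε hεpos hε4
        have hsε : Real.sqrt ε ≤ η / K := by
          calc Real.sqrt ε ≤ Real.sqrt ((η/K)^2) :=
                Real.sqrt_le_sqrt (min_le_right _ _)
            _ = η / K := Real.sqrt_sq (by positivity)
        have hεε : ε ≤ Real.sqrt ε := by
          have h6 : ε ≤ 1 := by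
            calc ε ≤ 1/8 := min_le_left _ _
              _ ≤ 1 := by norm_num
          have h7 : Real.sqrt ε * Real.sqrt ε = ε := Real.mul_self_sqrt hεpos.le
          have h8 : Real.sqrt ε ≤ 1 := by
            calc Real.sqrt ε ≤ Real.sqrt 1 := Real.sqrt_le_sqrt h6
              _ = 1 := Real.sqrt_one
          nlinarith [Real.sqrt_nonneg ε]
        have hdiv : N / D - (N / D) * ε ≤ S + L * ε + 3 * L * Real.sqrt ε := by
          rw [div_mul_eq_mul_div, ← sub_div]
          rw [div_le_iff₀ hD]
          calc N - N * ε = N * (1 - ε) := by ring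
            _ ≤ D * (S + L * ε + 3 * L * Real.sqrt ε) := h2
            _ = (S + L * ε + 3 * L * Real.sqrt ε) * D := by ring
        have hND0 : 0 ≤ N / D := by positivity
        have hsum : (N / D) * ε + L * ε + 3 * L * Real.sqrt ε ≤ η := by
          have h3 : (N / D) * ε + L * ε + 3 * L * Real.sqrt ε ≤
              (N / D + 4 * L) * Real.sqrt ε := by nlinarith
          have h4 : (N / D + 4 * L) * Real.sqrt ε ≤ (N / D + 4 * L) * (η / K) := by
            apply mul_le_mul_of_nonneg_left hsε (by positivity)
          have h5 : (N / D + 4 * L) * (η / K) ≤ η := by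
            rw [mul_div_assoc']
            rw [div_le_iff₀ hK0]
            nlinarith
          linarith
        linarith
      exact hfin


/-- A complex lush Banach space has Lipschitz numerical index 1; equivalently, every
Lipschitz map on it has numerical radius equal to its Lipschitz seminorm. -/
theorem lipNumIndex_eq_one_of_lush_complex {X : Type*} [NormedAddCommGroup X]
    [NormedSpace ℂ X] [CompleteSpace X] [Nontrivial X] (h : Lush ℂ X) :
    lipNumIndex ℂ X = 1 ∧
      ∀ T : X → X, (∃ C, LipschitzWith C T) → lipNumRadius ℂ T = lipSemi T := by
  have key : ∀ T : X → X, (∃ C, LipschitzWith C T) → lipNumRadius ℂ T = lipSemi T :=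
    fun T hT => key_thm h T hT
  constructor
  · have hidlip : ∃ C, LipschitzWith C (id : X → X) := ⟨1, LipschitzWith.id⟩
    have hid : lipSemi (id : X → X) = 1 := by
      have hset : {r : ℝ | ∃ x₁ x₂ : X, x₁ ≠ x₂ ∧ r = ‖id x₁ - id x₂‖ / ‖x₁ - x₂‖}
          = {(1:ℝ)} := by
        ext r
        simp only [id_eq, Set.mem_setOf_eq, Set.mem_singleton_iff]
        constructor
        · rintro ⟨x₁, x₂, hne, rfl⟩
          exact div_self (norm_ne_zero_iff.mpr (sub_ne_zero.mpr hne))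
        · rintro rfl
          obtain ⟨a, b, hab⟩ := exists_pair_ne X
          exact ⟨a, b, hab, (div_self (norm_ne_zero_iff.mpr (sub_ne_zero.mpr hab))).symm⟩
      rw [lipSemi, hset, csSup_singleton]
    have hset2 : {r : ℝ | ∃ T : X → X, (∃ C, LipschitzWith C T) ∧ lipSemi T = 1 ∧
        r = lipNumRadius ℂ T} = {(1:ℝ)} := by
      ext r
      simp only [Set.mem_setOf_eq, Set.mem_singleton_iff]
      constructor
      · rintro ⟨T, hT, h1, rfl⟩
        rw [key T hT, h1]
      · rintro rfl
        exact ⟨id, hidlip, hid, by rw [key id hidlip, hid]⟩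
    rw [lipNumIndex, hset2, csInf_singleton]
  · exact key
end
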